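/- arXiv:math/0406112 — 6 statements merged into one kernel-verified Lean document; each statement's English description precedes it below -/
import Mathlib

section
/- Let m be an odd positive integer and let r > 0. Then there exist constants a₀ > 0 and c > 0 such that for all real a ≥ a₀ and all real λ, μ with |λ| ≤ r and |μ| ≤ r, one has |p(λ,μ;ia)| ≥ c, where i is the imaginary unit. -/
open Finset

private lemma abs_pow_sub_pow_le' (x w : ℂ) (M : ℝ) (hx : norm x ≤ M)
    (hw : norm w ≤ M)
    (k : ℕ) : norm (x ^ k - w ^ k) ≤ k * M ^ (k - 1) * norm (x - w) := by
  have hM : 0 ≤ M := le_trans (norm_nonneg x) hx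
  rw [← geom_sum₂_mul, norm_mul]
  have hsum : norm (∑ i ∈ Finset.range k, x ^ i * w ^ (k - 1 - i)) ≤ k * M ^ (k - 1) := by
    calc norm (∑ i ∈ Finset.range k, x ^ i * w ^ (k - 1 - i))
        ≤ ∑ i ∈ Finset.range k, norm (x ^ i * w ^ (k - 1 - i)) :=
          norm_sum_le _ _
      _ ≤ ∑ i ∈ Finset.range k, M ^ (k - 1) := by
          apply Finset.sum_le_sum
          intro i hi
          rw [norm_mul, norm_pow, norm_pow]
          calc norm x ^ i * norm w ^ (k - 1 - i) ≤ M ^ i * M ^ (k - 1 - i) := by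
                have := norm_nonneg x
                have := norm_nonneg w
                gcongr
            _ = M ^ (k - 1) := by
                rw [← pow_add]
                congr 1
                simp at hi
                omega
      _ = k * M ^ (k - 1) := by rw [Finset.sum_const, Finset.card_range, nsmul_eq_mul]
  exact mul_le_mul_of_nonneg_right hsum (norm_nonneg _)

private lemma abs_term_sub' (x y w : ℂ) (M R : ℝ) (hx : norm x ≤ M)
    (hy : norm y ≤ M)
    (hw : norm w ≤ M) (hxw : norm (x - w) ≤ R) (hyw : norm (y - w) ≤ R)
    (hR : 0 ≤ R) (k j : ℕ) :
    norm (x ^ k * y ^ j - w ^ (k + j)) ≤ (k + j) * M ^ (k + j - 1) * R := by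
  have hM : 0 ≤ M := le_trans (norm_nonneg x) hx
  have hid : x ^ k * y ^ j - w ^ (k + j) = (x ^ k - w ^ k) * y ^ j + w ^ k * (y ^ j - w ^ j) := by
    rw [pow_add]; ring
  rw [hid]
  have h1 : norm ((x ^ k - w ^ k) * y ^ j) ≤ k * M ^ (k + j - 1) * R := by
    rcases Nat.eq_zero_or_pos k with hk | hk
    · simp [hk]
    · have e : M ^ (k - 1) * M ^ j = M ^ (k + j - 1) := by rw [← pow_add]; congr 1; omega
      rw [norm_mul, norm_pow]
      have hxk : norm (x ^ k - w ^ k) ≤ k * M ^ (k - 1) * R :=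
        le_trans (abs_pow_sub_pow_le' x w M hx hw k) (by gcongr)
      have hyj : norm y ^ j ≤ M ^ j := by have := norm_nonneg y; gcongr
      calc norm (x ^ k - w ^ k) * norm y ^ j
          ≤ (k * M ^ (k - 1) * R) * M ^ j :=
            mul_le_mul hxk hyj (by positivity) (by positivity)
        _ = k * (M ^ (k - 1) * M ^ j) * R := by ring
        _ = k * M ^ (k + j - 1) * R := by rw [e]
  have h2 : norm (w ^ k * (y ^ j - w ^ j)) ≤ j * M ^ (k + j - 1) * R := by
    rcases Nat.eq_zero_or_pos j with hj | hj
    · simp [hj]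
    · have e : M ^ k * M ^ (j - 1) = M ^ (k + j - 1) := by rw [← pow_add]; congr 1; omega
      rw [norm_mul, norm_pow]
      have hyj : norm (y ^ j - w ^ j) ≤ j * M ^ (j - 1) * R :=
        le_trans (abs_pow_sub_pow_le' y w M hy hw j) (by gcongr)
      have hwk : norm w ^ k ≤ M ^ k := by have := norm_nonneg w; gcongr
      calc norm w ^ k * norm (y ^ j - w ^ j)
          ≤ M ^ k * (j * M ^ (j - 1) * R) :=
            mul_le_mul hwk hyj (norm_nonneg _) (by positivity)
        _ = j * (M ^ k * M ^ (j - 1)) * R := by ring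
        _ = j * M ^ (k + j - 1) * R := by rw [e]
  calc norm ((x ^ k - w ^ k) * y ^ j + w ^ k * (y ^ j - w ^ j))
      ≤ norm ((x ^ k - w ^ k) * y ^ j) + norm (w ^ k * (y ^ j - w ^ j)) :=
        norm_add_le _ _
    _ ≤ k * M ^ (k + j - 1) * R + j * M ^ (k + j - 1) * R := add_le_add h1 h2
    _ = (k + j) * M ^ (k + j - 1) * R := by ring

/-- The polynomial `p(λ,μ;z) = ∑_{j=0}^{m-1} (λ - z)^{m-1-j} (μ - z)^j`. -/
noncomputable def pker (m : ℕ) (l μ z : ℂ) : ℂ :=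
  ∑ j ∈ Finset.range m, (l - z) ^ (m - 1 - j) * (μ - z) ^ j

/-- First assertion of Lemma 3: for `m` odd and `|λ| ≤ r`, `|μ| ≤ r`,
`|p(λ,μ;ia)| ≥ c > 0` for all sufficiently large `a`. -/
theorem pker_lower_bound_large_a (m : ℕ) (hm : 0 < m) (hodd : Odd m) (r : ℝ) (hr : 0 < r) :
    ∃ a₀ > 0, ∃ c > 0, ∀ a : ℝ, a₀ ≤ a → ∀ l μ : ℝ, |l| ≤ r → |μ| ≤ r →
      c ≤ ‖pker m (l : ℂ) (μ : ℂ) ((a : ℂ) * Complex.I)‖ := by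
  set n := m - 1 with hn
  have hpow_nonneg : (0 : ℝ) ≤ 2 ^ m * m * r := by positivity
  refine ⟨2 ^ m * m * r + r + 1, by positivity, 1, one_pos, ?_⟩
  intro a ha l μ hl hμ
  have ha1 : (1 : ℝ) ≤ a := by linarith
  have ha0 : (0 : ℝ) < a := lt_of_lt_of_le one_pos ha1
  have har : r ≤ a := by linarith
  set z : ℂ := (a : ℂ) * Complex.I with hz
  set x : ℂ := (l : ℂ) - z with hxdef
  set y : ℂ := (μ : ℂ) - z with hydef
  set w : ℂ := -z with hwdef
  have habsz : norm z = a := by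
    rw [hz, norm_mul, Complex.norm_I, Complex.norm_real, Real.norm_eq_abs, abs_of_pos ha0, mul_one]
  have habsw : norm w = a := by rw [hwdef, norm_neg, habsz]
  set M : ℝ := a + r with hM
  have hMx : norm x ≤ M := by
    rw [hxdef, sub_eq_add_neg]
    calc norm ((l : ℂ) + -z) ≤ norm (l : ℂ) + norm (-z) :=
          norm_add_le _ _
      _ ≤ r + a := by
          rw [norm_neg, habsz, Complex.norm_real, Real.norm_eq_abs]; exact add_le_add hl le_rfl
      _ = M := by rw [hM]; ring
  have hMy : norm y ≤ M := by
    rw [hydef, sub_eq_add_neg]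
    calc norm ((μ : ℂ) + -z) ≤ norm (μ : ℂ) + norm (-z) :=
          norm_add_le _ _
      _ ≤ r + a := by
          rw [norm_neg, habsz, Complex.norm_real, Real.norm_eq_abs]; exact add_le_add hμ le_rfl
      _ = M := by rw [hM]; ring
  have hMw : norm w ≤ M := by rw [habsw, hM]; linarith
  have hxw : norm (x - w) ≤ r := by
    have e : x - w = (l : ℂ) := by rw [hxdef, hwdef]; ring
    rw [e, Complex.norm_real, Real.norm_eq_abs]; exact hl
  have hyw : norm (y - w) ≤ r := by
    have e : y - w = (μ : ℂ) := by rw [hydef, hwdef]; ring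
    rw [e, Complex.norm_real, Real.norm_eq_abs]; exact hμ
  have hpker : pker m (l : ℂ) (μ : ℂ) z = ∑ j ∈ Finset.range m, x ^ (n - j) * y ^ j := rfl
  have key : norm (pker m (l : ℂ) (μ : ℂ) z - m * w ^ n) ≤ m * (n * M ^ (n - 1) * r) := by
    have hmw : (m : ℂ) * w ^ n = ∑ _j ∈ Finset.range m, w ^ n := by
      rw [Finset.sum_const, Finset.card_range, nsmul_eq_mul]
    rw [hpker, hmw, ← Finset.sum_sub_distrib]
    calc norm (∑ j ∈ Finset.range m, (x ^ (n - j) * y ^ j - w ^ n))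
        ≤ ∑ j ∈ Finset.range m, norm (x ^ (n - j) * y ^ j - w ^ n) :=
          norm_sum_le _ _
      _ ≤ ∑ _j ∈ Finset.range m, n * M ^ (n - 1) * r := by
          apply Finset.sum_le_sum
          intro j hj
          simp only [Finset.mem_range] at hj
          have hjn : j ≤ n := by omega
          have hnj : n - j + j = n := Nat.sub_add_cancel hjn
          have hterm := abs_term_sub' x y w M r hMx hMy hMw hxw hyw hr.le (n - j) j
          rw [hnj] at hterm
          calc norm (x ^ (n - j) * y ^ j - w ^ n)
              ≤ ((n - j : ℕ) + j) * M ^ (n - 1) * r := hterm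
            _ = n * M ^ (n - 1) * r := by rw [← Nat.cast_add, hnj]
      _ = m * (n * M ^ (n - 1) * r) := by
          rw [Finset.sum_const, Finset.card_range, nsmul_eq_mul]
  have habsmw : norm ((m : ℂ) * w ^ n) = m * a ^ n := by
    rw [norm_mul, norm_pow, habsw, Complex.norm_natCast]
  have lower : (m : ℝ) * a ^ n - m * (n * M ^ (n - 1) * r) ≤
      norm (pker m (l : ℂ) (μ : ℂ) z) := by
    have h := norm_sub_norm_le ((m : ℂ) * w ^ n) (pker m (l : ℂ) (μ : ℂ) z)
    rw [norm_sub_rev] at h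
    rw [habsmw] at h
    linarith
  -- final numeric estimate
  have hfin : (1 : ℝ) ≤ (m : ℝ) * a ^ n - m * (n * M ^ (n - 1) * r) := by
    have hm1 : (1 : ℝ) ≤ (m : ℝ) := by exact_mod_cast hm
    rcases Nat.eq_zero_or_pos n with hn0 | hn1
    · rw [hn0]
      simp
      linarith
    · set P : ℝ := a ^ (n - 1) with hP
      have hP1 : (1 : ℝ) ≤ P := by rw [hP]; exact one_le_pow₀ ha1
      have han : a ^ n = P * a := by
        rw [hP, ← pow_succ]
        congr 1
        omega
      have hMb : M ^ (n - 1) ≤ 2 ^ (n - 1) * P := by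
        rw [hP, ← mul_pow]
        apply pow_le_pow_left₀ (by rw [hM]; linarith)
        rw [hM]; linarith
      have hn2m : (n : ℝ) * 2 ^ (n - 1) ≤ m * 2 ^ m := by
        have h1 : (n : ℝ) ≤ m := by exact_mod_cast (by omega : n ≤ m)
        have h2 : (2 : ℝ) ^ (n - 1) ≤ 2 ^ m :=
          pow_le_pow_right₀ (by norm_num) (by omega)
        have := mul_le_mul h1 h2 (by positivity) (by exact_mod_cast Nat.zero_le m)
        linarith
      have hgap : 2 ^ m * (m : ℝ) * r + 1 ≤ a := by linarith
      rw [han]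
      nlinarith [mul_nonneg (mul_nonneg (mul_nonneg (Nat.cast_nonneg m : (0:ℝ) ≤ m)
          (Nat.cast_nonneg n : (0:ℝ) ≤ n)) hr.le)
          (sub_nonneg.mpr hMb),
        mul_nonneg (mul_nonneg (by positivity : (0:ℝ) ≤ (m:ℝ) * P) hr.le)
          (sub_nonneg.mpr hn2m),
        mul_le_mul_of_nonneg_left hgap (by positivity : (0:ℝ) ≤ (m:ℝ) * P),
        mul_le_mul hm1 hP1 one_pos.le (by linarith)]
  linarith
end

section
/- Let m be a positive integer, let a > 0, let 0 < r < R, let M ≥ 0, and let f : ℝ → ℂ be a function with |f| ≤ M whose support is contained in [-r, r]. Fix a real μ with |μ| ≤ r and define K(λ) = (f(λ) - f(μ)) / ((λ - ia)^{-m} - (μ - ia)^{-m}) for real λ with |λ| ≥ R. Then there exists a constant C (depending only on m, a, r, R, M) such that K is differentiable at every real λ with |λ| > R and |K′(λ)| ≤ C·(1 + |λ|)^{-m-1}. -/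
/-- Estimate (3.20) in the region `|μ| ≤ r`, `|λ| ≥ R > r`: the λ-derivative of the
kernel `K(λ) = (f(λ)-f(μ))/((λ-ia)^{-m} - (μ-ia)^{-m})` is `O((1+|λ|)^{-m-1})`. -/
theorem kernel_derivative_bound (m : ℕ) (hm : 0 < m) (a : ℝ) (ha : 0 < a)
    (r R : ℝ) (hr : 0 < r) (hrR : r < R) (M : ℝ) (hM : 0 ≤ M) (f : ℝ → ℂ)
    (hbdd : ∀ x : ℝ, ‖f x‖ ≤ M)
    (hsupp : Function.support f ⊆ Set.Icc (-r) r)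
    (μ : ℝ) (hμ : |μ| ≤ r) :
    ∃ C : ℝ, ∀ l : ℝ, R < |l| →
      DifferentiableAt ℝ
        (fun t : ℝ => (f t - f μ) /
          (((t : ℂ) - (a : ℂ) * Complex.I) ^ (-(m : ℤ)) -
            ((μ : ℂ) - (a : ℂ) * Complex.I) ^ (-(m : ℤ)))) l ∧
      ‖deriv
        (fun t : ℝ => (f t - f μ) /
          (((t : ℂ) - (a : ℂ) * Complex.I) ^ (-(m : ℤ)) -
            ((μ : ℂ) - (a : ℂ) * Complex.I) ^ (-(m : ℤ)))) l‖ ≤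
        C * (1 + |l|) ^ (-(m : ℝ) - 1) := by
  have hR0 : 0 < R := hr.trans hrR
  have hI : ∀ t : ℝ, ((t : ℂ) - (a : ℂ) * Complex.I) ≠ 0 := by
    intro t h
    have h2 := congrArg Complex.im h
    simp at h2
    linarith
  set g : ℝ → ℂ := fun t : ℝ => ((t : ℂ) - (a : ℂ) * Complex.I) ^ (-(m : ℤ)) with hg
  set d : ℂ := ((μ : ℂ) - (a : ℂ) * Complex.I) ^ (-(m : ℤ)) with hd
  have habs : ∀ t : ℝ, ‖(t : ℂ) - (a : ℂ) * Complex.I‖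
      = Real.sqrt (t ^ 2 + a ^ 2) := by
    intro t
    rw [Complex.norm_def, Complex.normSq_apply]
    norm_num
    ring_nf
  have hs_pos : ∀ t : ℝ, 0 < Real.sqrt (t ^ 2 + a ^ 2) := fun t =>
    Real.sqrt_pos.2 (by positivity)
  have hgabs : ∀ t : ℝ, ‖g t‖ = (Real.sqrt (t ^ 2 + a ^ 2) ^ m)⁻¹ := by
    intro t
    rw [hg]
    rw [norm_zpow, habs, zpow_neg, zpow_natCast]
  have hs_mono : ∀ x y : ℝ, |x| ≤ |y| → Real.sqrt (x ^ 2 + a ^ 2) ≤ Real.sqrt (y ^ 2 + a ^ 2) := by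
    intro x y h
    apply Real.sqrt_le_sqrt
    have h2 : x ^ 2 ≤ y ^ 2 := by
      rw [← sq_abs x, ← sq_abs y]
      exact pow_le_pow_left₀ (abs_nonneg x) h 2
    linarith
  set δ : ℝ := (Real.sqrt (r ^ 2 + a ^ 2) ^ m)⁻¹ - (Real.sqrt (R ^ 2 + a ^ 2) ^ m)⁻¹ with hδ
  have hδpos : 0 < δ := by
    rw [hδ, sub_pos]
    apply inv_strictAnti₀ (by positivity)
    apply pow_lt_pow_left₀ _ (le_of_lt (hs_pos r)) hm.ne'
    apply Real.sqrt_lt_sqrt (by positivity)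
    nlinarith
  -- denominator lower bound
  have hden : ∀ t : ℝ, R ≤ |t| → δ ≤ ‖g t - d‖ := by
    intro t ht
    have h1 : (Real.sqrt (r ^ 2 + a ^ 2) ^ m)⁻¹ ≤ ‖d‖ := by
      rw [hd, norm_zpow, habs, zpow_neg, zpow_natCast]
      apply inv_anti₀ (by positivity)
      exact pow_le_pow_left₀ (le_of_lt (hs_pos μ)) (hs_mono μ r (by rwa [abs_of_pos hr])) m
    have h2 : ‖g t‖ ≤ (Real.sqrt (R ^ 2 + a ^ 2) ^ m)⁻¹ := by
      rw [hgabs]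
      apply inv_anti₀ (by positivity)
      exact pow_le_pow_left₀ (le_of_lt (hs_pos R)) (hs_mono R t (by rwa [abs_of_pos hR0])) m
    have h3 : ‖d‖ - ‖g t‖ ≤ ‖g t - d‖ := by
      rw [norm_sub_rev]
      exact norm_sub_norm_le d (g t)
    rw [hδ]
    linarith
  have hne : ∀ t : ℝ, R ≤ |t| → g t - d ≠ 0 := by
    intro t ht h
    have := hden t ht
    rw [h] at this
    simp at this
    linarith
  -- derivative of g
  have hderiv : ∀ t : ℝ, HasDerivAt g
      ((-(m : ℤ) : ℂ) * ((t : ℂ) - (a : ℂ) * Complex.I) ^ (-(m : ℤ) - 1)) t := by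
    intro t
    have h0 : HasDerivAt (fun z : ℂ => z - (a : ℂ) * Complex.I) 1 (t : ℂ) :=
      (hasDerivAt_id _).sub_const _
    have h1 := HasDerivAt.comp (t : ℂ)
      (hasDerivAt_zpow (-(m : ℤ)) ((t : ℂ) - (a : ℂ) * Complex.I) (Or.inl (hI t))) h0
    have h2 : HasDerivAt (fun z : ℂ => (z - (a : ℂ) * Complex.I) ^ (-(m : ℤ)))
        ((-(m : ℤ) : ℂ) * ((t : ℂ) - (a : ℂ) * Complex.I) ^ (-(m : ℤ) - 1)) (t : ℂ) := by
      simpa [Function.comp_def] using h1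
    simpa [hg] using h2.comp_ofReal
  refine ⟨M * m * (1 + 1 / R) ^ (m + 1) / δ ^ 2, fun l hl => ?_⟩
  have hl0 : 0 < |l| := hR0.trans hl
  set G' : ℂ := (-(m : ℤ) : ℂ) * ((l : ℂ) - (a : ℂ) * Complex.I) ^ (-(m : ℤ) - 1) with hG'
  have hF : HasDerivAt (fun t : ℝ => (0 - f μ) / (g t - d))
      ((0 * (g l - d) - (0 - f μ) * G') / (g l - d) ^ 2) l :=
    (hasDerivAt_const l (0 - f μ)).div ((hderiv l).sub_const d) (hne l hl.le)
  have hev : (fun t : ℝ => (f t - f μ) / (g t - d))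
      =ᶠ[nhds l] (fun t : ℝ => (0 - f μ) / (g t - d)) := by
    have hopen : IsOpen {t : ℝ | R < |t|} := isOpen_lt continuous_const continuous_abs
    filter_upwards [hopen.mem_nhds hl] with t ht
    have hft : f t = 0 := by
      by_contra h
      have h2 := hsupp (Function.mem_support.mpr h)
      have h3 : |t| ≤ r := abs_le.mpr ⟨h2.1, h2.2⟩
      have : R < r := lt_of_lt_of_le ht h3
      linarith
    rw [hft]
  have hdiff : DifferentiableAt ℝ (fun t : ℝ => (f t - f μ) / (g t - d)) l :=
    hF.differentiableAt.congr_of_eventuallyEq hev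
  have hderiv_eq : deriv (fun t : ℝ => (f t - f μ) / (g t - d)) l
      = (0 * (g l - d) - (0 - f μ) * G') / (g l - d) ^ 2 := by
    rw [hev.deriv_eq, hF.deriv]
  refine ⟨hdiff, ?_⟩
  rw [hderiv_eq]
  have hnum : (0 * (g l - d) - (0 - f μ) * G') = f μ * G' := by ring
  rw [hnum, norm_div, norm_mul, norm_pow]
  -- bound on |G'|
  have hG'abs : ‖G'‖ ≤ m * (|l| ^ (m + 1))⁻¹ := by
    rw [hG', norm_mul, norm_zpow, habs]
    have h1 : ‖((-(m : ℤ) : ℂ))‖ = m := by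
      simp
    rw [h1]
    have h2 : (-(m : ℤ) - 1) = -((m + 1 : ℕ) : ℤ) := by push_cast; ring
    rw [h2, zpow_neg, zpow_natCast]
    apply mul_le_mul_of_nonneg_left _ (by positivity)
    apply inv_anti₀ (by positivity)
    apply pow_le_pow_left₀ (abs_nonneg l)
    have : |l| = Real.sqrt (l ^ 2) := (Real.sqrt_sq_eq_abs l).symm
    rw [this]
    apply Real.sqrt_le_sqrt
    nlinarith [sq_nonneg a]
  have hstep1 : ‖f μ‖ * ‖G'‖ / ‖g l - d‖ ^ 2
      ≤ M * (m * (|l| ^ (m + 1))⁻¹) / δ ^ 2 := by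
    apply div_le_div₀ (by positivity)
    · exact mul_le_mul (hbdd μ) hG'abs (norm_nonneg _) hM
    · positivity
    · exact pow_le_pow_left₀ hδpos.le (hden l hl.le) 2
  refine hstep1.trans ?_
  -- rewrite rpow
  have hrw : (1 + |l|) ^ (-(m : ℝ) - 1) = ((1 + |l|) ^ (m + 1))⁻¹ := by
    rw [show -(m : ℝ) - 1 = -((m + 1 : ℕ) : ℝ) by push_cast; ring,
      Real.rpow_neg (by positivity), Real.rpow_natCast]
  rw [hrw]
  have h1 : 1 ≤ |l| / R := (one_le_div hR0).2 hl.le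
  have h2 : 1 + |l| ≤ (1 + 1 / R) * |l| := by
    have h3 : (1 + 1 / R) * |l| = |l| + |l| / R := by field_simp
    rw [h3]
    linarith
  have hkey : (1 + |l|) ^ (m + 1) ≤ (1 + 1 / R) ^ (m + 1) * |l| ^ (m + 1) := by
    rw [← mul_pow]
    exact pow_le_pow_left₀ (by positivity) h2 (m + 1)
  have hstep2 : (|l| ^ (m + 1))⁻¹ ≤ (1 + 1 / R) ^ (m + 1) * ((1 + |l|) ^ (m + 1))⁻¹ := by
    rw [inv_eq_one_div, inv_eq_one_div, mul_one_div,
      div_le_div_iff₀ (by positivity) (by positivity), one_mul]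
    exact hkey
  calc M * (m * (|l| ^ (m + 1))⁻¹) / δ ^ 2
      = (M * m / δ ^ 2) * (|l| ^ (m + 1))⁻¹ := by ring
    _ ≤ (M * m / δ ^ 2) * ((1 + 1 / R) ^ (m + 1) * ((1 + |l|) ^ (m + 1))⁻¹) :=
        mul_le_mul_of_nonneg_left hstep2 (by positivity)
    _ = M * m * (1 + 1 / R) ^ (m + 1) / δ ^ 2 * ((1 + |l|) ^ (m + 1))⁻¹ := by ring
end

section
/- Let m be an odd positive integer and let r > 0. Then there exists a₀ > 0 such that for every real a with 0 < a ≤ a₀ there exists a constant C with the following property: for all real λ, μ with |λ| ≥ 2r and |μ| ≥ 2r, the function λ ↦ p(λ,μ;0)/p(λ,μ;ia) is well-defined and differentiable at λ, and |d/dλ ( p(λ,μ;0)/p(λ,μ;ia) )| ≤ C·(|λ| + |μ|)^{-2}. -/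
open Finset

set_option linter.unusedTactic false
set_option linter.unreachableTactic false


lemma npsp (x y : ℂ) (t : ℝ) (n : ℕ) (hx : ‖x‖ ≤ t) (hy : ‖y‖ ≤ t) :
    ‖x ^ n - y ^ n‖ ≤ n * t ^ (n - 1) * ‖x - y‖ := by
  have h := geom_sum₂_mul x y n
  have hsum : ‖∑ i ∈ range n, x ^ i * y ^ (n - 1 - i)‖ ≤ n * t ^ (n - 1) := by
    calc ‖∑ i ∈ range n, x ^ i * y ^ (n - 1 - i)‖
        ≤ ∑ i ∈ range n, ‖x ^ i * y ^ (n - 1 - i)‖ := norm_sum_le _ _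
      _ ≤ ∑ _i ∈ range n, t ^ (n - 1) := by
          apply Finset.sum_le_sum
          intro i hi
          rw [norm_mul, norm_pow, norm_pow]
          calc ‖x‖ ^ i * ‖y‖ ^ (n - 1 - i) ≤ t ^ i * t ^ (n - 1 - i) := by
                have ht : 0 ≤ t := le_trans (norm_nonneg x) hx
                gcongr <;> first | positivity | exact norm_nonneg _ | assumption
            _ = t ^ (n - 1) := by
                rw [← pow_add]; congr 1; have := mem_range.mp hi; omega
      _ = n * t ^ (n - 1) := by rw [Finset.sum_const, card_range, nsmul_eq_mul]
  calc ‖x ^ n - y ^ n‖ = ‖(∑ i ∈ range n, x ^ i * y ^ (n - 1 - i)) * (x - y)‖ := by rw [h]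
    _ = ‖∑ i ∈ range n, x ^ i * y ^ (n - 1 - i)‖ * ‖x - y‖ := norm_mul _ _
    _ ≤ n * t ^ (n - 1) * ‖x - y‖ := by
        apply mul_le_mul_of_nonneg_right hsum (norm_nonneg _)


lemma term_pert (p n : ℕ) (x y z : ℂ) (t : ℝ) (hx : ‖x‖ ≤ t) (hy : ‖y‖ ≤ t) (hz : ‖z‖ ≤ t) :
    ‖(x - z) ^ p * (y - z) ^ n - x ^ p * y ^ n‖ ≤ (p + n : ℕ) * (2 * t) ^ (p + n - 1) * ‖z‖ := by
  have ht : 0 ≤ t := le_trans (norm_nonneg x) hx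
  have hxz : ‖x - z‖ ≤ 2 * t := le_trans (norm_sub_le x z) (by linarith)
  have hyz : ‖y - z‖ ≤ 2 * t := le_trans (norm_sub_le y z) (by linarith)
  have hx2 : ‖x‖ ≤ 2 * t := by linarith
  have hy2 : ‖y‖ ≤ 2 * t := by linarith
  have key : (x - z) ^ p * (y - z) ^ n - x ^ p * y ^ n
      = ((x - z) ^ p - x ^ p) * (y - z) ^ n + x ^ p * ((y - z) ^ n - y ^ n) := by ring
  have h1 : ‖(x - z) ^ p - x ^ p‖ ≤ p * (2 * t) ^ (p - 1) * ‖z‖ := by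
    have := npsp (x - z) x (2 * t) p hxz hx2
    have e : x - z - x = -z := by ring
    rwa [e, norm_neg] at this
  have h2 : ‖(y - z) ^ n - y ^ n‖ ≤ n * (2 * t) ^ (n - 1) * ‖z‖ := by
    have := npsp (y - z) y (2 * t) n hyz hy2
    have e : y - z - y = -z := by ring
    rwa [e, norm_neg] at this
  have h3 : (p : ℝ) * (2 * t) ^ (p - 1) * (2 * t) ^ n ≤ p * (2 * t) ^ (p + n - 1) := by
    rcases Nat.eq_zero_or_pos p with hp | hp
    · simp [hp]
    · rw [mul_assoc, ← pow_add]
      apply le_of_eq; congr 2; omega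
  have h4 : ‖x‖ ^ p * ((n : ℝ) * (2 * t) ^ (n - 1)) ≤ n * (2 * t) ^ (p + n - 1) := by
    rcases Nat.eq_zero_or_pos n with hn | hn
    · simp [hn]
    · calc ‖x‖ ^ p * ((n : ℝ) * (2 * t) ^ (n - 1)) ≤ (2*t) ^ p * ((n : ℝ) * (2 * t) ^ (n - 1)) := by
            gcongr <;> first | exact norm_nonneg _ | positivity | exact hx2
        _ = (n : ℝ) * ((2*t) ^ p * (2 * t) ^ (n - 1)) := by ring
        _ = n * (2 * t) ^ (p + n - 1) := by rw [← pow_add]; congr 2; omega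
  calc ‖(x - z) ^ p * (y - z) ^ n - x ^ p * y ^ n‖
      ≤ ‖((x - z) ^ p - x ^ p) * (y - z) ^ n‖ + ‖x ^ p * ((y - z) ^ n - y ^ n)‖ := by
        rw [key]; exact norm_add_le _ _
    _ ≤ (p * (2 * t) ^ (p - 1) * ‖z‖) * (2 * t) ^ n + ‖x‖ ^ p * ((n : ℝ) * (2 * t) ^ (n - 1) * ‖z‖) := by
        rw [norm_mul, norm_mul, norm_pow, norm_pow]
        gcongr <;> positivity
    _ ≤ (p : ℝ) * (2 * t) ^ (p + n - 1) * ‖z‖ + (n : ℝ) * (2 * t) ^ (p + n - 1) * ‖z‖ := by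
        have a1 := mul_le_mul_of_nonneg_right h3 (norm_nonneg z)
        have a2 := mul_le_mul_of_nonneg_right h4 (norm_nonneg z)
        ring_nf at a1 a2 ⊢
        linarith
    _ = ((p + n : ℕ) : ℝ) * (2 * t) ^ (p + n - 1) * ‖z‖ := by push_cast; ring

noncomputable def Qr (m : ℕ) (x y : ℝ) : ℝ := ∑ j ∈ Finset.range m, x ^ (m - 1 - j) * y ^ j

lemma pker_smul (m : ℕ) (σ x y z : ℂ) :
    pker m (σ * x) (σ * y) (σ * z) = σ ^ (m - 1) * pker m x y z := by
  unfold pker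
  rw [Finset.mul_sum]
  apply Finset.sum_congr rfl
  intro j hj
  rw [← mul_sub σ x z, ← mul_sub σ y z, mul_pow, mul_pow, mul_mul_mul_comm, ← pow_add,
    show m - 1 - j + j = m - 1 from by have := mem_range.mp hj; omega]

lemma pker_ofReal (m : ℕ) (x y : ℝ) : pker m ↑x ↑y 0 = (Qr m x y : ℂ) := by
  unfold pker Qr
  push_cast
  simp

lemma Qr_pos (m : ℕ) (hm : 0 < m) (hodd : Odd m) {x y : ℝ} (h : x ≠ 0 ∨ y ≠ 0) :
    0 < Qr m x y := by
  rcases eq_or_ne x y with rfl | hxy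
  · have hx : x ≠ 0 := by tauto
    have hq : Qr m x x = m * x ^ (m - 1) := by
      unfold Qr
      rw [Finset.sum_congr rfl (fun j hj => by
        rw [← pow_add, show m - 1 - j + j = m - 1 from by have := mem_range.mp hj; omega]),
        Finset.sum_const, card_range, nsmul_eq_mul]
    rw [hq]
    have hev : Even (m - 1) := Nat.Odd.sub_odd hodd odd_one
    have : 0 < x ^ (m - 1) := hev.pow_pos hx
    positivity
  · have key : Qr m x y * (y - x) = y ^ m - x ^ m := by
      unfold Qr
      rw [← geom_sum₂_mul y x m]
      congr 1
      exact Finset.sum_congr rfl fun j _ => by ring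
    have hmono := Odd.strictMono_pow (R := ℝ) hodd
    rcases lt_or_gt_of_ne hxy with h1 | h1
    · have hlt : x ^ m < y ^ m := hmono h1
      have hp : 0 < Qr m x y * (y - x) := by rw [key]; linarith
      rcases mul_pos_iff.mp hp with ⟨h2, _⟩ | ⟨_, h3⟩
      · exact h2
      · linarith
    · have hlt : y ^ m < x ^ m := hmono h1
      have hp : 0 < Qr m x y * (x - y) := by
        have e : Qr m x y * (x - y) = x ^ m - y ^ m := by linear_combination -key
        rw [e]; linarith
      rcases mul_pos_iff.mp hp with ⟨h2, _⟩ | ⟨_, h3⟩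
      · exact h2
      · linarith

lemma Qr_min (m : ℕ) (hm : 0 < m) (hodd : Odd m) :
    ∃ c > 0, ∀ x y : ℝ, |x| + |y| = 1 → c ≤ Qr m x y := by
  set K : Set (ℝ × ℝ) := {v | |v.1| + |v.2| = 1} with hKdef
  have hcont : Continuous fun v : ℝ × ℝ => Qr m v.1 v.2 := by
    unfold Qr; exact continuous_finset_sum _ fun j _ => by fun_prop
  have hclosed : IsClosed K := isClosed_eq (by fun_prop) continuous_const
  have hbdd : Bornology.IsBounded K := by
    apply (Metric.isBounded_closedBall (x := (0 : ℝ × ℝ)) (r := 1)).subset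
    intro v hv
    simp only [Metric.mem_closedBall, dist_zero_right]
    have hv' : |v.1| + |v.2| = 1 := hv
    rw [Prod.norm_def]
    simp only [Real.norm_eq_abs]
    have h1 := abs_nonneg v.1
    have h2 := abs_nonneg v.2
    exact max_le (by linarith) (by linarith)
  have hK : IsCompact K := Metric.isCompact_of_isClosed_isBounded hclosed hbdd
  have hne : K.Nonempty := ⟨(1, 0), by simp [hKdef]⟩
  obtain ⟨v, hvK, hvmin⟩ := hK.exists_isMinOn hne hcont.continuousOn
  have hvne : v.1 ≠ 0 ∨ v.2 ≠ 0 := by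
    by_contra hcon
    push_neg at hcon
    have hv' : |v.1| + |v.2| = 1 := hvK
    rw [hcon.1, hcon.2] at hv'; simp at hv'
  refine ⟨Qr m v.1 v.2, Qr_pos m hm hodd hvne, fun x y hxy => ?_⟩
  exact hvmin (a := (x, y)) hxy

lemma pker_sub_pker (m : ℕ) (x y z : ℂ) (t : ℝ) (hx : ‖x‖ ≤ t) (hy : ‖y‖ ≤ t)
    (hz : ‖z‖ ≤ t) : ‖pker m x y z - pker m x y 0‖ ≤ m * ((m : ℝ) * (2 * t) ^ (m - 2) * ‖z‖) := by
  have ht : 0 ≤ t := le_trans (norm_nonneg x) hx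
  unfold pker
  rw [← Finset.sum_sub_distrib]
  calc ‖∑ j ∈ range m, ((x - z) ^ (m-1-j) * (y - z) ^ j - (x - 0) ^ (m-1-j) * (y - 0) ^ j)‖
      ≤ ∑ j ∈ range m, ‖(x - z) ^ (m-1-j) * (y - z) ^ j - (x - 0) ^ (m-1-j) * (y - 0) ^ j‖ :=
        norm_sum_le _ _
    _ ≤ ∑ _j ∈ range m, ((m : ℝ) * (2 * t) ^ (m - 2) * ‖z‖) := by
        apply Finset.sum_le_sum
        intro j hj
        simp only [sub_zero]
        have h := term_pert (m - 1 - j) j x y z t hx hy hz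
        have e : (m - 1 - j) + j = m - 1 := by have := mem_range.mp hj; omega
        rw [e] at h
        refine le_trans h ?_
        rw [show m - 1 - 1 = m - 2 from by omega]
        have : ((m - 1 : ℕ) : ℝ) ≤ (m : ℝ) := by exact_mod_cast Nat.sub_le m 1
        gcongr <;> first | exact norm_nonneg _ | exact pow_nonneg (by linarith) _ | linarith
    _ = m * ((m : ℝ) * (2 * t) ^ (m - 2) * ‖z‖) := by
        rw [Finset.sum_const, card_range, nsmul_eq_mul]

set_option maxHeartbeats 2000000 in
/-- Estimate (3.25): for `m` odd and `a > 0` small, the λ-derivative of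
`p(λ,μ;0)/p(λ,μ;ia)` is `O((|λ|+|μ|)^{-2})` in the region `|λ| ≥ 2r`, `|μ| ≥ 2r`. -/
theorem pker_ratio_deriv_bound (m : ℕ) (hm : 0 < m) (hodd : Odd m) (r : ℝ) (hr : 0 < r) :
    ∃ a₀ > 0, ∀ a : ℝ, 0 < a → a ≤ a₀ → ∃ C : ℝ,
      ∀ l μ : ℝ, 2 * r ≤ |l| → 2 * r ≤ |μ| →
        pker m (l : ℂ) (μ : ℂ) ((a : ℂ) * Complex.I) ≠ 0 ∧
        DifferentiableAt ℝ
          (fun t : ℝ => pker m (t : ℂ) (μ : ℂ) 0 /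
            pker m (t : ℂ) (μ : ℂ) ((a : ℂ) * Complex.I)) l ∧
        ‖(deriv
          (fun t : ℝ => pker m (t : ℂ) (μ : ℂ) 0 /
            pker m (t : ℂ) (μ : ℂ) ((a : ℂ) * Complex.I)) l)‖ ≤
          C / (|l| + |μ|) ^ 2 := by
  by_cases hm1 : m = 1
  · subst hm1
    refine ⟨1, one_pos, fun a ha ha0 => ⟨1, fun l μ hl hμ => ?_⟩⟩
    have hp : ∀ w zz : ℂ, pker 1 w ↑μ zz = 1 := by intro w zz; simp [pker]
    have hfun : (fun t : ℝ => pker 1 (t : ℂ) (μ : ℂ) 0 /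
        pker 1 (t : ℂ) (μ : ℂ) ((a : ℂ) * Complex.I)) = fun _ => 1 := by
      funext t; rw [hp, hp]; norm_num
    refine ⟨by rw [hp]; exact one_ne_zero, ?_, ?_⟩
    · rw [hfun]; exact differentiableAt_const _
    · rw [hfun]
      have h2r : (0:ℝ) < |l| + |μ| := by
        have := abs_nonneg l; have := abs_nonneg μ; nlinarith
      rw [deriv_const]
      simp only [norm_zero]
      positivity
  have hm3 : 3 ≤ m := by rcases hodd with ⟨k, hk⟩; omega
  obtain ⟨c, hc, hcmin⟩ := Qr_min m hm hodd
  set D : ℝ := (m : ℝ) ^ 2 * 2 ^ m with hD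
  have hD0 : 0 < D := by positivity
  refine ⟨min (2 * r) (2 * r * c / D), by positivity, fun a ha ha0 => ?_⟩
  refine ⟨8 * (m : ℝ) ^ 4 * a * 2 ^ (2 * m - 4) / c ^ 2, fun l μ hl hμ => ?_⟩
  have ha2r : a ≤ 2 * r := le_trans ha0 (min_le_left _ _)
  have haD : a ≤ 2 * r * c / D := le_trans ha0 (min_le_right _ _)
  set z : ℂ := (a : ℂ) * Complex.I with hzdef
  set s : ℝ := |l| + |μ| with hsdef
  clear_value z s
  have hs4 : 4 * r ≤ s := by rw [hsdef]; linarith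
  have hs0 : 0 < s := lt_of_lt_of_le (by linarith) hs4
  have hnz : ‖z‖ = a := by
    rw [hzdef, norm_mul, Complex.norm_real, Complex.norm_I, Real.norm_eq_abs,
      abs_of_pos ha, mul_one]
  have hls : ‖(l : ℂ)‖ ≤ s := by
    rw [Complex.norm_real, Real.norm_eq_abs]
    have h9 := abs_nonneg μ
    rw [hsdef]
    try linarith
  have hμs : ‖(μ : ℂ)‖ ≤ s := by
    rw [Complex.norm_real, Real.norm_eq_abs]
    have h9 := abs_nonneg l
    rw [hsdef]
    try linarith
  have hzs : ‖z‖ ≤ s := by rw [hnz]; linarith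
  -- lower bound on the denominator
  have hb1 : a / s ≤ 1 / 2 := by
    rw [div_le_div_iff₀ hs0 (by norm_num)]; linarith
  have hbD : a / s ≤ c / (2 * D) := by
    have h1 : a / s ≤ a / (4 * r) :=
      div_le_div_of_nonneg_left ha.le (by linarith) hs4
    have h2 : a / (4 * r) ≤ (2 * r * c / D) / (4 * r) := by gcongr <;> linarith
    have h3 : (2 * r * c / D) / (4 * r) = c / (2 * D) := by
      field_simp; ring
    linarith
  have hx'1 : |l / s| + |μ / s| = 1 := by
    rw [abs_div, abs_div, abs_of_pos hs0, ← add_div, ← hsdef, div_self (ne_of_gt hs0)]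
  have hQc : c ≤ Qr m (l / s) (μ / s) := hcmin _ _ hx'1
  have hQpos : 0 < Qr m (l / s) (μ / s) := lt_of_lt_of_le hc hQc
  have hx'le : ‖((l / s : ℝ) : ℂ)‖ ≤ 1 := by
    rw [Complex.norm_real, Real.norm_eq_abs]
    have := abs_nonneg (μ / s); linarith
  have hy'le : ‖((μ / s : ℝ) : ℂ)‖ ≤ 1 := by
    rw [Complex.norm_real, Real.norm_eq_abs]
    have := abs_nonneg (l / s); linarith
  have hble : ‖((a / s : ℝ) : ℂ) * Complex.I‖ ≤ 1 := by
    rw [norm_mul, Complex.norm_real, Complex.norm_I, Real.norm_eq_abs, mul_one,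
      abs_of_pos (div_pos ha hs0)]
    linarith
  have hcirc : c / 2 ≤ ‖pker m ((l / s : ℝ) : ℂ) ((μ / s : ℝ) : ℂ) (((a / s : ℝ) : ℂ) * Complex.I)‖ := by
    have hpert := pker_sub_pker m ((l / s : ℝ) : ℂ) ((μ / s : ℝ) : ℂ)
      (((a / s : ℝ) : ℂ) * Complex.I) 1 hx'le hy'le hble
    have hq : ‖pker m ((l / s : ℝ) : ℂ) ((μ / s : ℝ) : ℂ) 0‖ = Qr m (l / s) (μ / s) := by
      rw [pker_ofReal, Complex.norm_real, Real.norm_eq_abs, abs_of_pos hQpos]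
    have hnb : ‖(((a / s : ℝ) : ℂ) * Complex.I)‖ = a / s := by
      rw [norm_mul, Complex.norm_real, Complex.norm_I, Real.norm_eq_abs, mul_one,
        abs_of_pos (div_pos ha hs0)]
    rw [hnb] at hpert
    have htri := norm_sub_norm_le
      (pker m ((l / s : ℝ) : ℂ) ((μ / s : ℝ) : ℂ) 0)
      (pker m ((l / s : ℝ) : ℂ) ((μ / s : ℝ) : ℂ) (((a / s : ℝ) : ℂ) * Complex.I))
    rw [norm_sub_rev, hq] at htri
    have hDb : (m : ℝ) * ((m : ℝ) * (2 * 1) ^ (m - 2) * (a / s)) ≤ c / 2 := by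
      have h2m : (2 : ℝ) ^ (m - 2) ≤ 2 ^ m := by
        apply pow_le_pow_right₀ (by norm_num) (by omega)
      have hms : (0:ℝ) ≤ (m:ℝ) := Nat.cast_nonneg m
      have hab : 0 ≤ a / s := (div_pos ha hs0).le
      have step : (m : ℝ) * ((m : ℝ) * (2 * 1) ^ (m - 2) * (a / s)) ≤ D * (a / s) := by
        rw [hD]; rw [mul_one]
        nlinarith [mul_le_mul_of_nonneg_right h2m (mul_nonneg (mul_nonneg hms hms) hab)]
      have : D * (a / s) ≤ D * (c / (2 * D)) := by
        apply mul_le_mul_of_nonneg_left hbD hD0.le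
      have hDc : D * (c / (2 * D)) = c / 2 := by field_simp
      linarith
    linarith
  have hsc : pker m (l : ℂ) (μ : ℂ) z
      = (s : ℂ) ^ (m - 1) * pker m ((l / s : ℝ) : ℂ) ((μ / s : ℝ) : ℂ)
          (((a / s : ℝ) : ℂ) * Complex.I) := by
    have hsC : (s : ℂ) ≠ 0 := by
      simpa using ne_of_gt hs0
    rw [← pker_smul m (s : ℂ)]
    congr 1
    · push_cast; rw [mul_comm]; exact (div_mul_cancel₀ _ hsC).symm
    · push_cast; rw [mul_comm]; exact (div_mul_cancel₀ _ hsC).symm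
    · rw [hzdef]; push_cast
      rw [show ((s:ℂ)) * ((a:ℂ)/(s:ℂ) * Complex.I) = ((a:ℂ)/(s:ℂ)*(s:ℂ)) * Complex.I from by ring,
        div_mul_cancel₀ _ hsC]
  have hElow : c / 2 * s ^ (m - 1) ≤ ‖pker m (l : ℂ) (μ : ℂ) z‖ := by
    rw [hsc, norm_mul, norm_pow, Complex.norm_real, Real.norm_eq_abs, abs_of_pos hs0]
    calc c / 2 * s ^ (m - 1) = s ^ (m - 1) * (c / 2) := by ring
      _ ≤ s ^ (m - 1) * ‖pker m ((l / s : ℝ) : ℂ) ((μ / s : ℝ) : ℂ)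
            (((a / s : ℝ) : ℂ) * Complex.I)‖ := by
          apply mul_le_mul_of_nonneg_left hcirc (pow_nonneg hs0.le _)
  have hEne : pker m (l : ℂ) (μ : ℂ) z ≠ 0 := by
    intro h0
    rw [h0, norm_zero] at hElow
    nlinarith [pow_pos hs0 (m - 1)]
  -- derivative setup
  have hN : HasDerivAt (fun w : ℂ => pker m w (μ : ℂ) 0)
      (∑ j ∈ range m, ((m - 1 - j : ℕ) : ℂ) * (l : ℂ) ^ (m - 1 - j - 1) * (μ : ℂ) ^ j)
      (l : ℂ) := by
    have heq : (fun w : ℂ => pker m w (μ : ℂ) 0)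
        = fun w : ℂ => ∑ j ∈ range m, w ^ (m - 1 - j) * (μ : ℂ) ^ j := by
      funext w; unfold pker; simp
    rw [heq]
    exact HasDerivAt.fun_sum fun j _ => (hasDerivAt_pow _ _).mul_const _
  have hE : HasDerivAt (fun w : ℂ => pker m w (μ : ℂ) z)
      (∑ j ∈ range m,
        ((m - 1 - j : ℕ) : ℂ) * ((l : ℂ) - z) ^ (m - 1 - j - 1) * 1 * ((μ : ℂ) - z) ^ j)
      (l : ℂ) := by
    have heq : (fun w : ℂ => pker m w (μ : ℂ) z)
        = fun w : ℂ => ∑ j ∈ range m, (w - z) ^ (m - 1 - j) * ((μ : ℂ) - z) ^ j := by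
      funext w; rfl
    rw [heq]
    exact HasDerivAt.fun_sum fun j _ =>
      (((hasDerivAt_id (l : ℂ)).sub_const z).pow _).mul_const _
  set NN := pker m (l : ℂ) (μ : ℂ) 0 with hNNd
  set EE := pker m (l : ℂ) (μ : ℂ) z with hEEd
  set N' := ∑ j ∈ range m, ((m - 1 - j : ℕ) : ℂ) * (l : ℂ) ^ (m - 1 - j - 1) * (μ : ℂ) ^ j
    with hN'd
  set E' := ∑ j ∈ range m,
      ((m - 1 - j : ℕ) : ℂ) * ((l : ℂ) - z) ^ (m - 1 - j - 1) * 1 * ((μ : ℂ) - z) ^ j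
    with hE'd
  have hdiv : HasDerivAt (fun t : ℝ => pker m (t : ℂ) (μ : ℂ) 0 / pker m (t : ℂ) (μ : ℂ) z)
      ((N' * EE - NN * E') / EE ^ 2) l := HasDerivAt.comp_ofReal (hN.div hE hEne)
  refine ⟨hEne, hdiv.differentiableAt, ?_⟩
  rw [hdiv.deriv, norm_div, norm_pow]
  have h2s0 : (0:ℝ) ≤ 2 * s := by linarith
  -- upper bounds
  have hlz : ‖(l : ℂ) - z‖ ≤ 2 * s := le_trans (norm_sub_le _ _) (by linarith)
  have hμz : ‖(μ : ℂ) - z‖ ≤ 2 * s := le_trans (norm_sub_le _ _) (by linarith)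
  have hEup : ‖EE‖ ≤ (m : ℝ) * (2 * s) ^ (m - 1) := by
    rw [hEEd]; unfold pker
    calc ‖∑ j ∈ range m, ((l:ℂ) - z) ^ (m - 1 - j) * ((μ:ℂ) - z) ^ j‖
        ≤ ∑ j ∈ range m, ‖((l:ℂ) - z) ^ (m - 1 - j) * ((μ:ℂ) - z) ^ j‖ := norm_sum_le _ _
      _ ≤ ∑ _j ∈ range m, (2 * s) ^ (m - 1) := by
          apply Finset.sum_le_sum
          intro j hj
          rw [norm_mul, norm_pow, norm_pow]
          calc ‖(l:ℂ) - z‖ ^ (m-1-j) * ‖(μ:ℂ) - z‖ ^ j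
              ≤ (2*s) ^ (m-1-j) * (2*s) ^ j := by gcongr <;> exact norm_nonneg _
            _ = (2*s) ^ (m-1) := by
                rw [← pow_add]; congr 1; have := mem_range.mp hj; omega
      _ = m * (2 * s) ^ (m - 1) := by rw [Finset.sum_const, card_range, nsmul_eq_mul]
  have hE'up : ‖E'‖ ≤ (m : ℝ)^2 * (2 * s) ^ (m - 2) := by
    rw [hE'd]
    calc ‖∑ j ∈ range m,
          ((m - 1 - j : ℕ) : ℂ) * ((l : ℂ) - z) ^ (m - 1 - j - 1) * 1 * ((μ : ℂ) - z) ^ j‖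
        ≤ ∑ j ∈ range m,
          ‖((m - 1 - j : ℕ) : ℂ) * ((l : ℂ) - z) ^ (m - 1 - j - 1) * 1 * ((μ : ℂ) - z) ^ j‖ :=
          norm_sum_le _ _
      _ ≤ ∑ _j ∈ range m, ((m:ℝ) * (2 * s) ^ (m - 2)) := by
          apply Finset.sum_le_sum
          intro j hj
          by_cases hp : m - 1 - j = 0
          · rw [hp]
            simp only [Nat.cast_zero, zero_mul, norm_zero]
            exact mul_nonneg (Nat.cast_nonneg m) (pow_nonneg h2s0 _)
          · rw [norm_mul, norm_mul, norm_mul, norm_one, mul_one, norm_pow, norm_pow]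
            have hco : ‖((m - 1 - j : ℕ) : ℂ)‖ = ((m - 1 - j : ℕ) : ℝ) := by simp
            rw [hco]
            have c1 : ((m - 1 - j : ℕ) : ℝ) ≤ (m : ℝ) := Nat.cast_le.mpr (by omega)
            calc ((m-1-j : ℕ) : ℝ) * ‖(l:ℂ) - z‖ ^ (m-1-j-1) * ‖(μ:ℂ) - z‖ ^ j
                ≤ (m : ℝ) * (2*s) ^ (m-1-j-1) * (2*s) ^ j := by
                  gcongr <;> first | exact norm_nonneg _ | exact Nat.cast_nonneg _
              _ = (m : ℝ) * (2*s) ^ (m-2) := by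
                  rw [mul_assoc, ← pow_add]
                  congr 2
                  have := mem_range.mp hj; omega
      _ = (m:ℝ) * ((m:ℝ) * (2 * s) ^ (m - 2)) := by
          rw [Finset.sum_const, card_range, nsmul_eq_mul]
      _ = (m : ℝ)^2 * (2 * s) ^ (m - 2) := by ring
  have hNEd : ‖EE - NN‖ ≤ (m:ℝ) * ((m:ℝ) * (2*s)^(m-2) * a) := by
    have h := pker_sub_pker m (l : ℂ) (μ : ℂ) z s hls hμs hzs
    rw [hnz] at h
    exact h
  have hN'E' : ‖N' - E'‖ ≤ (m:ℝ) * ((m:ℝ)^2 * (2*s)^(m-3) * a) := by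
    rw [hN'd, hE'd, ← Finset.sum_sub_distrib]
    have hpow3 : (0:ℝ) ≤ (2*s)^(m-3) := pow_nonneg h2s0 _
    calc ‖∑ j ∈ range m,
          (((m - 1 - j : ℕ) : ℂ) * (l : ℂ) ^ (m - 1 - j - 1) * (μ : ℂ) ^ j
            - ((m - 1 - j : ℕ) : ℂ) * ((l : ℂ) - z) ^ (m - 1 - j - 1) * 1 * ((μ : ℂ) - z) ^ j)‖
        ≤ ∑ j ∈ range m,
          ‖((m - 1 - j : ℕ) : ℂ) * (l : ℂ) ^ (m - 1 - j - 1) * (μ : ℂ) ^ j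
            - ((m - 1 - j : ℕ) : ℂ) * ((l : ℂ) - z) ^ (m - 1 - j - 1) * 1 * ((μ : ℂ) - z) ^ j‖ :=
          norm_sum_le _ _
      _ ≤ ∑ _j ∈ range m, ((m:ℝ)^2 * (2*s)^(m-3) * a) := by
          apply Finset.sum_le_sum
          intro j hj
          have e : ((m - 1 - j : ℕ) : ℂ) * (l : ℂ) ^ (m - 1 - j - 1) * (μ : ℂ) ^ j
              - ((m - 1 - j : ℕ) : ℂ) * ((l : ℂ) - z) ^ (m - 1 - j - 1) * 1 * ((μ : ℂ) - z) ^ j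
              = ((m - 1 - j : ℕ) : ℂ) * ((l : ℂ) ^ (m - 1 - j - 1) * (μ : ℂ) ^ j
                - ((l : ℂ) - z) ^ (m - 1 - j - 1) * ((μ : ℂ) - z) ^ j) := by ring
          rw [e, norm_mul]
          by_cases hp : m - 1 - j = 0
          · rw [hp]
            simp only [Nat.cast_zero, norm_zero, zero_mul]
            exact mul_nonneg (mul_nonneg (by positivity) hpow3) ha.le
          · have hco : ‖((m - 1 - j : ℕ) : ℂ)‖ = ((m - 1 - j : ℕ) : ℝ) := by simp
            rw [hco, norm_sub_rev]
            have h := term_pert (m-1-j-1) j (l : ℂ) (μ : ℂ) z s hls hμs hzs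
            have e2 : (m-1-j-1) + j = m-2 := by have := mem_range.mp hj; omega
            rw [e2, show m-2-1 = m-3 from by omega, hnz] at h
            have c1 : ((m-1-j : ℕ) : ℝ) ≤ (m : ℝ) := Nat.cast_le.mpr (by omega)
            have c2 : ((m-2 : ℕ) : ℝ) ≤ (m : ℝ) := Nat.cast_le.mpr (by omega)
            calc ((m-1-j : ℕ) : ℝ)
                  * ‖((l:ℂ) - z) ^ (m-1-j-1) * ((μ:ℂ) - z) ^ j - (l:ℂ) ^ (m-1-j-1) * (μ:ℂ) ^ j‖
                ≤ ((m-1-j : ℕ) : ℝ) * (((m-2 : ℕ) : ℝ) * (2*s)^(m-3) * a) :=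
                  mul_le_mul_of_nonneg_left h (Nat.cast_nonneg _)
              _ = (((m-1-j : ℕ) : ℝ) * ((m-2 : ℕ) : ℝ)) * ((2*s)^(m-3) * a) := by ring
              _ ≤ ((m:ℝ) * (m:ℝ)) * ((2*s)^(m-3) * a) := by
                  apply mul_le_mul_of_nonneg_right _ (mul_nonneg hpow3 ha.le)
                  exact mul_le_mul c1 c2 (Nat.cast_nonneg _) (Nat.cast_nonneg _)
              _ = (m:ℝ)^2 * (2*s)^(m-3) * a := by ring
      _ = (m:ℝ) * ((m:ℝ)^2 * (2*s)^(m-3) * a) := by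
          rw [Finset.sum_const, card_range, nsmul_eq_mul]
  -- combine
  have hnum : ‖N' * EE - NN * E'‖ ≤ 2 * (m:ℝ)^4 * a * (2*s)^(2*m-4) := by
    have e : N' * EE - NN * E' = (N' - E') * EE + (EE - NN) * E' := by ring
    rw [e]
    have e1 : (2*s)^(m-3) * (2*s)^(m-1) = (2*s)^(2*m-4) := by
      rw [← pow_add]; congr 1; omega
    have e2 : (2*s)^(m-2) * (2*s)^(m-2) = (2*s)^(2*m-4) := by
      rw [← pow_add]; congr 1; omega
    have nn1 : (0:ℝ) ≤ (m:ℝ) * ((m:ℝ)^2 * (2*s)^(m-3) * a) := by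
      have := pow_nonneg h2s0 (m-3)
      positivity
    have nn2 : (0:ℝ) ≤ (m:ℝ) * ((m:ℝ) * (2*s)^(m-2) * a) := by
      have := pow_nonneg h2s0 (m-2)
      positivity
    calc ‖(N' - E') * EE + (EE - NN) * E'‖
        ≤ ‖N' - E'‖ * ‖EE‖ + ‖EE - NN‖ * ‖E'‖ := by
          refine le_trans (norm_add_le _ _) ?_
          rw [norm_mul, norm_mul]
      _ ≤ ((m:ℝ) * ((m:ℝ)^2 * (2*s)^(m-3) * a)) * ((m : ℝ) * (2 * s) ^ (m - 1))
          + ((m:ℝ) * ((m:ℝ) * (2*s)^(m-2) * a)) * ((m : ℝ)^2 * (2 * s) ^ (m - 2)) := by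
          apply add_le_add
          · exact mul_le_mul hN'E' hEup (norm_nonneg _) nn1
          · exact mul_le_mul hNEd hE'up (norm_nonneg _) nn2
      _ = 2 * (m:ℝ)^4 * a * (2*s)^(2*m-4) := by
          linear_combination ((m:ℝ)^4 * a) * e1 + ((m:ℝ)^4 * a) * e2
  have hden : (c/2)^2 * (s^(m-1))^2 ≤ ‖EE‖^2 := by
    have h0 : (0:ℝ) ≤ c/2 * s^(m-1) :=
      mul_nonneg (by linarith) (pow_nonneg hs0.le _)
    nlinarith [hElow, norm_nonneg EE]
  have hdenpos : (0:ℝ) < (c/2)^2 * (s^(m-1))^2 := by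
    have h1 : (0:ℝ) < c/2 := by linarith
    have h2 : (0:ℝ) < s^(m-1) := pow_pos hs0 _
    positivity
  calc ‖N' * EE - NN * E'‖ / ‖EE‖^2
      ≤ (2 * (m:ℝ)^4 * a * (2*s)^(2*m-4)) / ((c/2)^2 * (s^(m-1))^2) := by
        apply div_le_div₀ _ hnum hdenpos hden
        have := pow_nonneg h2s0 (2*m-4)
        positivity
    _ = (8 * (m:ℝ)^4 * a * 2^(2*m-4) / c^2) / s^2 := by
        have e3 : (2*s)^(2*m-4) = 2^(2*m-4) * s^(2*m-4) := mul_pow 2 s _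
        have e4 : (s^(m-1))^2 = s^(2*m-4) * s^2 := by
          rw [← pow_mul, ← pow_add]; congr 1; omega
        rw [e3, e4]
        have hs' : s ≠ 0 := ne_of_gt hs0
        have hc' : c ≠ 0 := ne_of_gt hc
        have hsp : s^(2*m-4) ≠ 0 := pow_ne_zero _ hs'
        field_simp
        ring
end

section
/- Let m be an odd positive integer and let r > 0. Define f(λ) = (λ^m - i)^{-1} for real λ (well-defined since λ^m is real, so λ^m - i ≠ 0). Then there exists a₀ > 0 such that for every real a with 0 < a ≤ a₀ there exists a constant C with |f(λ) - f(μ)| ≤ C · |(λ - ia)^{-m} - (μ - ia)^{-m}| for all real λ, μ with |λ| ≥ 2r and |μ| ≥ 2r. -/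
open Finset Complex

/-- `‖x^i - X^i‖ * B ≤ i * B^i * e` when `‖x‖,‖X‖ ≤ B` and `‖x-X‖ ≤ e`. -/
private lemma pow_diff_bd {B e : ℝ} (hB : 0 ≤ B) (he : 0 ≤ e) {x X : ℂ}
    (hx : ‖x‖ ≤ B) (hX : ‖X‖ ≤ B) (hd : ‖x - X‖ ≤ e) :
    ∀ i : ℕ, ‖x ^ i - X ^ i‖ * B ≤ i * B ^ i * e := by
  intro i
  induction i with
  | zero => simp
  | succ i ih =>
    have key : x ^ (i+1) - X ^ (i+1) = x * (x ^ i - X ^ i) + (x - X) * X ^ i := by ring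
    have h1 : ‖x ^ (i+1) - X ^ (i+1)‖ ≤
        ‖x‖ * ‖x ^ i - X ^ i‖ + ‖x - X‖ * ‖X‖ ^ i := by
      rw [key]
      refine (norm_add_le _ _).trans ?_
      rw [norm_mul, norm_mul, norm_pow]
    have hXp : ‖X‖ ^ i ≤ B ^ i := pow_le_pow_left₀ (norm_nonneg _) hX i
    calc ‖x ^ (i+1) - X ^ (i+1)‖ * B
        ≤ (‖x‖ * ‖x ^ i - X ^ i‖ + ‖x - X‖ * ‖X‖ ^ i) * B :=
          mul_le_mul_of_nonneg_right h1 hB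
      _ = ‖x‖ * (‖x ^ i - X ^ i‖ * B)
            + ‖x - X‖ * ‖X‖ ^ i * B := by ring
      _ ≤ B * (i * B ^ i * e) + e * B ^ i * B := by
          gcongr
      _ = ((i : ℝ) + 1) * B ^ (i+1) * e := by ring
      _ = ((i + 1 : ℕ) : ℝ) * B ^ (i+1) * e := by push_cast; ring

/-- termwise bound: `‖x^i y^k - X^i Y^k‖ * B ≤ (i+k) * B^(i+k) * e`. -/
private lemma term_diff_bd {B e : ℝ} (hB : 0 ≤ B) (he : 0 ≤ e) {x X y Y : ℂ}
    (hx : ‖x‖ ≤ B) (hX : ‖X‖ ≤ B)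
    (hy : ‖y‖ ≤ B) (hY : ‖Y‖ ≤ B)
    (hdx : ‖x - X‖ ≤ e) (hdy : ‖y - Y‖ ≤ e)
    (i k : ℕ) :
    ‖x ^ i * y ^ k - X ^ i * Y ^ k‖ * B ≤ (i + k : ℕ) * B ^ (i + k) * e := by
  have key : x ^ i * y ^ k - X ^ i * Y ^ k = x ^ i * (y ^ k - Y ^ k) + (x ^ i - X ^ i) * Y ^ k := by
    ring
  have h1 : ‖x ^ i * y ^ k - X ^ i * Y ^ k‖ ≤
      ‖x‖ ^ i * ‖y ^ k - Y ^ k‖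
        + ‖x ^ i - X ^ i‖ * ‖Y‖ ^ k := by
    rw [key]
    refine (norm_add_le _ _).trans ?_
    rw [norm_mul, norm_mul, norm_pow, norm_pow]
  have hxp : ‖x‖ ^ i ≤ B ^ i := pow_le_pow_left₀ (norm_nonneg _) hx i
  have hYp : ‖Y‖ ^ k ≤ B ^ k := pow_le_pow_left₀ (norm_nonneg _) hY k
  have h2 := pow_diff_bd hB he hy hY hdy k
  have h3 := pow_diff_bd hB he hx hX hdx i
  calc ‖x ^ i * y ^ k - X ^ i * Y ^ k‖ * B
      ≤ (‖x‖ ^ i * ‖y ^ k - Y ^ k‖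
          + ‖x ^ i - X ^ i‖ * ‖Y‖ ^ k) * B :=
        mul_le_mul_of_nonneg_right h1 hB
    _ = ‖x‖ ^ i * (‖y ^ k - Y ^ k‖ * B)
          + (‖x ^ i - X ^ i‖ * B) * ‖Y‖ ^ k := by ring
    _ ≤ B ^ i * ((k : ℝ) * B ^ k * e) + ((i : ℝ) * B ^ i * e) * B ^ k := by
        gcongr
    _ = ((i : ℝ) + (k : ℝ)) * (B ^ i * B ^ k) * e := by ring
    _ = ((i + k : ℕ) : ℝ) * B ^ (i + k) * e := by rw [pow_add]; push_cast; ring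

/-- Lower bound for the real geometric-type sum when both arguments are positive. -/
private lemma S_lower_pos (m : ℕ) (hm : 0 < m) {l μ : ℝ} (hl : 0 < l) (hμ : 0 < μ) :
    max l μ ^ (m - 1) ≤ ∑ i ∈ Finset.range m, l ^ i * μ ^ (m - 1 - i) := by
  have hterm : ∀ i ∈ Finset.range m, (0:ℝ) ≤ l ^ i * μ ^ (m - 1 - i) := by
    intro i _; positivity
  rcases le_total l μ with h | h
  · have h0 : max l μ ^ (m-1) = l ^ 0 * μ ^ (m - 1 - 0) := by
      rw [max_eq_right h]; simp
    rw [h0]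
    exact Finset.single_le_sum hterm (Finset.mem_range.2 hm)
  · have h0 : max l μ ^ (m-1) = l ^ (m-1) * μ ^ (m - 1 - (m-1)) := by
      rw [max_eq_left h]; simp
    rw [h0]
    exact Finset.single_le_sum hterm (Finset.mem_range.2 (by omega))

/-- Lower bound for `|∑ l^i μ^(m-1-i)|` for nonzero real `l, μ`, `m` odd. -/
private lemma S_lower (m : ℕ) (hm : 0 < m) (hodd : Odd m) {l μ : ℝ}
    (hl : l ≠ 0) (hμ : μ ≠ 0) :
    max |l| |μ| ^ (m - 1) ≤ 2 * |∑ i ∈ Finset.range m, l ^ i * μ ^ (m - 1 - i)| := by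
  have hev : Even (m - 1) := Nat.Odd.sub_odd hodd odd_one
  rcases lt_or_gt_of_ne hl with hl' | hl' <;> rcases lt_or_gt_of_ne hμ with hμ' | hμ'
  · -- both negative : reduce to positive case
    have heq : ∑ i ∈ Finset.range m, l ^ i * μ ^ (m - 1 - i)
        = ∑ i ∈ Finset.range m, (-l) ^ i * (-μ) ^ (m - 1 - i) := by
      refine Finset.sum_congr rfl fun i hi => ?_
      have hik : i + (m - 1 - i) = m - 1 := by
        have := Finset.mem_range.1 hi; omega
      have hsign : ((-1:ℝ)) ^ i * (-1) ^ (m - 1 - i) = 1 := by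
        rw [← pow_add, hik]; exact hev.neg_one_pow
      have h2 : (-l) ^ i * (-μ) ^ (m - 1 - i) = l ^ i * μ ^ (m - 1 - i) := by
        rw [neg_pow, neg_pow]
        linear_combination (l ^ i * μ ^ (m - 1 - i)) * hsign
      exact h2.symm
    have key := S_lower_pos m hm (neg_pos.2 hl') (neg_pos.2 hμ')
    have habs : max |l| |μ| = max (-l) (-μ) := by
      rw [abs_of_neg hl', abs_of_neg hμ']
    have hnn : (0:ℝ) ≤ ∑ i ∈ Finset.range m, (-l) ^ i * (-μ) ^ (m - 1 - i) :=
      Finset.sum_nonneg fun i _ =>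
        mul_nonneg (pow_nonneg (by linarith) i) (pow_nonneg (by linarith) _)
    rw [heq, _root_.abs_of_nonneg hnn, habs]
    linarith [key, hnn]
  · -- l < 0 < μ : opposite signs
    have hne : l - μ ≠ 0 := by intro h; nlinarith
    have hgeo := geom_sum₂_mul l μ m
    have h1 : |l ^ m - μ ^ m| = |l| ^ m + |μ| ^ m := by
      have hlm : l ^ m < 0 := hodd.pow_neg hl'
      have hμm : 0 < μ ^ m := pow_pos hμ' m
      rw [abs_of_neg hl', abs_of_pos hμ', hodd.neg_pow]
      rw [abs_of_neg (by linarith)]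
      ring
    have h2 : |l - μ| ≤ 2 * max |l| |μ| := by
      have := abs_sub_abs_le_abs_sub l μ
      have h3 : |l - μ| ≤ |l| + |μ| := abs_sub l μ
      have := le_max_left |l| |μ|; have := le_max_right |l| |μ|
      linarith
    have hMm : max |l| |μ| ^ m ≤ |l| ^ m + |μ| ^ m := by
      rcases max_cases |l| |μ| with ⟨h, _⟩ | ⟨h, _⟩ <;> rw [h] <;>
        [nlinarith [pow_nonneg (abs_nonneg μ) m]; nlinarith [pow_nonneg (abs_nonneg l) m]]
    have habs : |∑ i ∈ Finset.range m, l ^ i * μ ^ (m - 1 - i)| * |l - μ|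
        = |l ^ m - μ ^ m| := by rw [← abs_mul, hgeo]
    have hMpos : 0 < max |l| |μ| := lt_max_of_lt_left (abs_pos.2 hl)
    have hMM : max |l| |μ| ^ (m-1) * max |l| |μ| = max |l| |μ| ^ m := by
      rw [← pow_succ]; congr 1; omega
    have hpow : max |l| |μ| ^ (m-1) * (2 * max |l| |μ|) = 2 * max |l| |μ| ^ m := by
      rw [← hMM]; ring
    have hdpos : 0 < |l - μ| := abs_pos.2 hne
    rw [← mul_le_mul_iff_left₀ hdpos]
    calc max |l| |μ| ^ (m-1) * |l - μ| ≤ max |l| |μ| ^ (m-1) * (2 * max |l| |μ|) := by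
          gcongr
      _ = 2 * max |l| |μ| ^ m := hpow
      _ ≤ 2 * (|l| ^ m + |μ| ^ m) := by linarith
      _ = 2 * |l ^ m - μ ^ m| := by rw [h1]
      _ = 2 * (|∑ i ∈ Finset.range m, l ^ i * μ ^ (m - 1 - i)| * |l - μ|) := by rw [habs]
      _ = 2 * |∑ i ∈ Finset.range m, l ^ i * μ ^ (m - 1 - i)| * |l - μ| := by ring
  · -- μ < 0 < l : opposite signs (symmetric)
    have hne : l - μ ≠ 0 := by intro h; nlinarith
    have hgeo := geom_sum₂_mul l μ m
    have h1 : |l ^ m - μ ^ m| = |l| ^ m + |μ| ^ m := by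
      have hμm : μ ^ m < 0 := hodd.pow_neg hμ'
      have hlm : 0 < l ^ m := pow_pos hl' m
      rw [abs_of_pos hl', abs_of_neg hμ', hodd.neg_pow]
      rw [abs_of_pos (by linarith)]
      ring
    have h2 : |l - μ| ≤ 2 * max |l| |μ| := by
      have h3 : |l - μ| ≤ |l| + |μ| := abs_sub l μ
      have := le_max_left |l| |μ|; have := le_max_right |l| |μ|
      linarith
    have hMm : max |l| |μ| ^ m ≤ |l| ^ m + |μ| ^ m := by
      rcases max_cases |l| |μ| with ⟨h, _⟩ | ⟨h, _⟩ <;> rw [h] <;>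
        [nlinarith [pow_nonneg (abs_nonneg μ) m]; nlinarith [pow_nonneg (abs_nonneg l) m]]
    have habs : |∑ i ∈ Finset.range m, l ^ i * μ ^ (m - 1 - i)| * |l - μ|
        = |l ^ m - μ ^ m| := by rw [← abs_mul, hgeo]
    have hMpos : 0 < max |l| |μ| := lt_max_of_lt_left (abs_pos.2 hl)
    have hMM : max |l| |μ| ^ (m-1) * max |l| |μ| = max |l| |μ| ^ m := by
      rw [← pow_succ]; congr 1; omega
    have hpow : max |l| |μ| ^ (m-1) * (2 * max |l| |μ|) = 2 * max |l| |μ| ^ m := by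
      rw [← hMM]; ring
    have hdpos : 0 < |l - μ| := abs_pos.2 hne
    rw [← mul_le_mul_iff_left₀ hdpos]
    calc max |l| |μ| ^ (m-1) * |l - μ| ≤ max |l| |μ| ^ (m-1) * (2 * max |l| |μ|) := by
          gcongr
      _ = 2 * max |l| |μ| ^ m := hpow
      _ ≤ 2 * (|l| ^ m + |μ| ^ m) := by linarith
      _ = 2 * |l ^ m - μ ^ m| := by rw [h1]
      _ = 2 * (|∑ i ∈ Finset.range m, l ^ i * μ ^ (m - 1 - i)| * |l - μ|) := by rw [habs]
      _ = 2 * |∑ i ∈ Finset.range m, l ^ i * μ ^ (m - 1 - i)| * |l - μ| := by ring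
  · -- both positive
    have key := S_lower_pos m hm hl' hμ'
    have habs : max |l| |μ| = max l μ := by rw [abs_of_pos hl', abs_of_pos hμ']
    have hnn : (0:ℝ) ≤ ∑ i ∈ Finset.range m, l ^ i * μ ^ (m - 1 - i) :=
      Finset.sum_nonneg fun i _ => by positivity
    rw [_root_.abs_of_nonneg hnn, habs]
    linarith [key, hnn]

/-- Boundedness of the kernel `K(λ,μ) = (f(λ)-f(μ))/(g(λ)-g(μ))` with
`f(λ) = (λ^m - i)⁻¹` and `g(λ) = (λ-ia)^{-m}` in the region `|λ| ≥ 2r`, `|μ| ≥ 2r`,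
for `m` odd and `a > 0` sufficiently small. -/
theorem kernel_bounded_at_infinity (m : ℕ) (hm : 0 < m) (hodd : Odd m)
    (r : ℝ) (hr : 0 < r) :
    ∃ a₀ > 0, ∀ a : ℝ, 0 < a → a ≤ a₀ → ∃ C : ℝ,
      ∀ l μ : ℝ, 2 * r ≤ |l| → 2 * r ≤ |μ| →
        ‖((l : ℂ) ^ m - Complex.I)⁻¹ - ((μ : ℂ) ^ m - Complex.I)⁻¹‖ ≤
          C * ‖((l : ℂ) - (a : ℂ) * Complex.I) ^ (-(m : ℤ)) -
            ((μ : ℂ) - (a : ℂ) * Complex.I) ^ (-(m : ℤ))‖ := by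
  refine ⟨r / (m ^ 2 * 2 ^ m), by positivity, fun a ha ha₀ => ?_⟩
  refine ⟨4 * m * 4 ^ m, fun l μ hl hμ => ?_⟩
  -- basic positivity facts
  have hm1 : (1:ℝ) ≤ (m:ℝ) := by exact_mod_cast hm
  have har : a ≤ r := by
    refine ha₀.trans (div_le_self hr.le ?_)
    have h2 : (1:ℝ) ≤ 2 ^ m := one_le_pow₀ (by norm_num)
    nlinarith
  have hlne : l ≠ 0 := by
    intro h; rw [h] at hl; simp at hl; linarith
  have hμne : μ ≠ 0 := by
    intro h; rw [h] at hμ; simp at hμ; linarith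
  set M : ℝ := max |l| |μ| with hMdef
  have hM2r : 2 * r ≤ M := le_trans hl (le_max_left _ _)
  have hMpos : 0 < M := by linarith
  have hlM : |l| ≤ M := le_max_left _ _
  have hμM : |μ| ≤ M := le_max_right _ _
  set zl : ℂ := (l : ℂ) - (a : ℂ) * Complex.I with hzldef
  set zμ : ℂ := (μ : ℂ) - (a : ℂ) * Complex.I with hzμdef
  set S : ℂ := ∑ i ∈ Finset.range m, (l:ℂ) ^ i * (μ:ℂ) ^ (m - 1 - i) with hSdef
  set Sa : ℂ := ∑ i ∈ Finset.range m, zl ^ i * zμ ^ (m - 1 - i) with hSadef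
  set d : ℝ := ‖(l:ℂ) - (μ:ℂ)‖ with hddef
  -- nonvanishing
  have hzl : zl ≠ 0 := by
    rw [hzldef]; intro h
    have := congrArg Complex.im h
    simp at this; linarith
  have hzμ : zμ ≠ 0 := by
    rw [hzμdef]; intro h
    have := congrArg Complex.im h
    simp at this; linarith
  have hcastl : ((l:ℂ)) ^ m = ((l ^ m : ℝ) : ℂ) := by push_cast; ring
  have hcastμ : ((μ:ℂ)) ^ m = ((μ ^ m : ℝ) : ℂ) := by push_cast; ring
  have hwl : (l:ℂ) ^ m - Complex.I ≠ 0 := by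
    intro h
    rw [hcastl] at h
    have := congrArg Complex.im h
    rw [Complex.sub_im, Complex.ofReal_im, Complex.I_im, Complex.zero_im] at this
    linarith
  have hwμ : (μ:ℂ) ^ m - Complex.I ≠ 0 := by
    intro h
    rw [hcastμ] at h
    have := congrArg Complex.im h
    rw [Complex.sub_im, Complex.ofReal_im, Complex.I_im, Complex.zero_im] at this
    linarith
  -- geometric sum identities
  have hg1 : S * ((l:ℂ) - (μ:ℂ)) = (l:ℂ) ^ m - (μ:ℂ) ^ m := geom_sum₂_mul _ _ m
  have hzlzμ : zl - zμ = (l:ℂ) - (μ:ℂ) := by rw [hzldef, hzμdef]; ring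
  have hg2 : Sa * ((l:ℂ) - (μ:ℂ)) = zl ^ m - zμ ^ m := by
    rw [← hzlzμ]; exact geom_sum₂_mul _ _ m
  -- rewrite both sides as quotients
  have hLHS : ‖((l:ℂ) ^ m - Complex.I)⁻¹ - ((μ:ℂ) ^ m - Complex.I)⁻¹‖
      = (‖S‖ * d) /
        (‖(l:ℂ) ^ m - Complex.I‖ * ‖(μ:ℂ) ^ m - Complex.I‖) := by
    rw [inv_sub_inv hwl hwμ, norm_div, norm_mul]
    congr 1
    rw [show ((μ:ℂ) ^ m - Complex.I) - ((l:ℂ) ^ m - Complex.I) = -(S * ((l:ℂ) - (μ:ℂ))) by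
      rw [hg1]; ring]
    rw [norm_neg, norm_mul]
  have hRHS : ‖(zl ^ m)⁻¹ - (zμ ^ m)⁻¹‖
      = (‖Sa‖ * d) / (‖zl‖ ^ m * ‖zμ‖ ^ m) := by
    rw [inv_sub_inv (pow_ne_zero m hzl) (pow_ne_zero m hzμ), norm_div, norm_mul, norm_pow, norm_pow]
    congr 1
    rw [show zμ ^ m - zl ^ m = -(Sa * ((l:ℂ) - (μ:ℂ))) by rw [hg2]; ring]
    rw [norm_neg, norm_mul]
  -- lower bounds on the denominators of the left side
  have hAL : |l| ^ m ≤ ‖(l:ℂ) ^ m - Complex.I‖ := by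
    have h1 : ((l:ℂ) ^ m - Complex.I).re = l ^ m := by
      rw [hcastl, Complex.sub_re, Complex.ofReal_re, Complex.I_re, sub_zero]
    calc |l| ^ m = |l ^ m| := (_root_.abs_pow l m).symm
      _ = |((l:ℂ) ^ m - Complex.I).re| := by rw [h1]
      _ ≤ ‖(l:ℂ) ^ m - Complex.I‖ := Complex.abs_re_le_norm _
  have hAM : |μ| ^ m ≤ ‖(μ:ℂ) ^ m - Complex.I‖ := by
    have h1 : ((μ:ℂ) ^ m - Complex.I).re = μ ^ m := by
      rw [hcastμ, Complex.sub_re, Complex.ofReal_re, Complex.I_re, sub_zero]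
    calc |μ| ^ m = |μ ^ m| := (_root_.abs_pow μ m).symm
      _ = |((μ:ℂ) ^ m - Complex.I).re| := by rw [h1]
      _ ≤ ‖(μ:ℂ) ^ m - Complex.I‖ := Complex.abs_re_le_norm _
  -- upper bounds for |zl|, |zμ|
  have haI : ‖(a:ℂ) * Complex.I‖ = a := by
    rw [norm_mul, Complex.norm_I, Complex.norm_real, Real.norm_eq_abs, mul_one, abs_of_pos ha]
  have hBL : ‖zl‖ ≤ 2 * |l| := by
    rw [hzldef, sub_eq_add_neg]
    refine (norm_add_le _ _).trans ?_
    rw [norm_neg, haI, Complex.norm_real, Real.norm_eq_abs]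
    linarith
  have hBM : ‖zμ‖ ≤ 2 * |μ| := by
    rw [hzμdef, sub_eq_add_neg]
    refine (norm_add_le _ _).trans ?_
    rw [norm_neg, haI, Complex.norm_real, Real.norm_eq_abs]
    linarith
  have hzl2M : ‖zl‖ ≤ 2 * M := by linarith
  have hzμ2M : ‖zμ‖ ≤ 2 * M := by linarith
  have hl2M : ‖(l:ℂ)‖ ≤ 2 * M := by rw [Complex.norm_real, Real.norm_eq_abs]; linarith
  have hμ2M : ‖(μ:ℂ)‖ ≤ 2 * M := by rw [Complex.norm_real, Real.norm_eq_abs]; linarith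
  have hdl : ‖zl - (l:ℂ)‖ ≤ a := by
    rw [hzldef, show (l:ℂ) - (a:ℂ) * Complex.I - (l:ℂ) = -((a:ℂ) * Complex.I) by ring,
      norm_neg, haI]
  have hdμ : ‖zμ - (μ:ℂ)‖ ≤ a := by
    rw [hzμdef, show (μ:ℂ) - (a:ℂ) * Complex.I - (μ:ℂ) = -((a:ℂ) * Complex.I) by ring,
      norm_neg, haI]
  -- bound on |Sa - S|
  have h2Mnn : (0:ℝ) ≤ 2 * M := by linarith
  have hstep : ∀ i ∈ Finset.range m,
      ‖zl ^ i * zμ ^ (m - 1 - i) - (l:ℂ) ^ i * (μ:ℂ) ^ (m - 1 - i)‖ * (2 * M)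
        ≤ ((m - 1 : ℕ) : ℝ) * (2 * M) ^ (m - 1) * a := by
    intro i hi
    have hik : i + (m - 1 - i) = m - 1 := by have := Finset.mem_range.1 hi; omega
    have := term_diff_bd h2Mnn ha.le hzl2M hl2M hzμ2M hμ2M hdl hdμ i (m - 1 - i)
    rwa [hik] at this
  have hsum : ‖Sa - S‖ * (2 * M)
      ≤ (m:ℝ) * (((m - 1 : ℕ) : ℝ) * (2 * M) ^ (m - 1) * a) := by
    have h1 : ‖Sa - S‖ ≤ ∑ i ∈ Finset.range m,
        ‖zl ^ i * zμ ^ (m - 1 - i) - (l:ℂ) ^ i * (μ:ℂ) ^ (m - 1 - i)‖ := by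
      rw [hSadef, hSdef, ← Finset.sum_sub_distrib]
      exact norm_sum_le _ _
    calc ‖Sa - S‖ * (2 * M)
        ≤ (∑ i ∈ Finset.range m,
            ‖zl ^ i * zμ ^ (m - 1 - i) - (l:ℂ) ^ i * (μ:ℂ) ^ (m - 1 - i)‖) * (2 * M) :=
          mul_le_mul_of_nonneg_right h1 h2Mnn
      _ = ∑ i ∈ Finset.range m,
            ‖zl ^ i * zμ ^ (m - 1 - i) - (l:ℂ) ^ i * (μ:ℂ) ^ (m - 1 - i)‖ * (2 * M) :=
          Finset.sum_mul _ _ _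
      _ ≤ ∑ _i ∈ Finset.range m, ((m - 1 : ℕ) : ℝ) * (2 * M) ^ (m - 1) * a :=
          Finset.sum_le_sum hstep
      _ = (m:ℝ) * (((m - 1 : ℕ) : ℝ) * (2 * M) ^ (m - 1) * a) := by
          rw [Finset.sum_const, Finset.card_range, nsmul_eq_mul]
  -- smallness of a gives |Sa - S| ≤ M^(m-1)/4
  have hMM : M ^ (m - 1) * M = M ^ m := by rw [← pow_succ]; congr 1; omega
  have h2m : (2:ℝ) ^ (m - 1) * 2 = 2 ^ m := by rw [← pow_succ]; congr 1; omega
  have hc : (m:ℝ) ^ 2 * 2 ^ m * a ≤ r := by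
    have hpos : (0:ℝ) < (m:ℝ) ^ 2 * 2 ^ m := by positivity
    have h := (le_div_iff₀ hpos).mp ha₀
    calc (m:ℝ) ^ 2 * 2 ^ m * a = a * ((m:ℝ) ^ 2 * 2 ^ m) := by ring
      _ ≤ r := h
  have hkey : (m:ℝ) * ((m - 1 : ℕ) : ℝ) * 2 ^ (m - 1) * a ≤ M / 4 := by
    have hm1' : ((m - 1 : ℕ) : ℝ) ≤ (m:ℝ) := by exact_mod_cast Nat.sub_le m 1
    have e1 : (m:ℝ) * (m:ℝ) * 2 ^ (m - 1) * a * 2 = (m:ℝ) ^ 2 * 2 ^ m * a := by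
      rw [← h2m]; ring
    have s1 : (m:ℝ) * ((m - 1 : ℕ) : ℝ) * 2 ^ (m - 1) * a
        ≤ (m:ℝ) * (m:ℝ) * 2 ^ (m - 1) * a := by
      gcongr <;> first | positivity | linarith
    linarith [s1, e1, hc, hM2r]
  have hdiff : ‖Sa - S‖ ≤ M ^ (m - 1) / 4 := by
    rw [← mul_le_mul_iff_left₀ (show (0:ℝ) < 2 * M by linarith)]
    have hMp : (0:ℝ) ≤ M ^ (m - 1) := by positivity
    calc ‖Sa - S‖ * (2 * M)
        ≤ (m:ℝ) * (((m - 1 : ℕ) : ℝ) * (2 * M) ^ (m - 1) * a) := hsum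
      _ = ((m:ℝ) * ((m - 1 : ℕ) : ℝ) * 2 ^ (m - 1) * a) * M ^ (m - 1) := by
          rw [mul_pow]; ring
      _ ≤ (M / 4) * M ^ (m - 1) := mul_le_mul_of_nonneg_right hkey hMp
      _ = M ^ (m - 1) / 4 * (2 * M) / 2 := by ring
      _ ≤ M ^ (m - 1) / 4 * (2 * M) := by
          have : (0:ℝ) ≤ M ^ (m - 1) / 4 * (2 * M) := by positivity
          linarith
  -- lower bound on |S| and hence on |Sa|
  have hScast : ((∑ i ∈ Finset.range m, l ^ i * μ ^ (m - 1 - i) : ℝ) : ℂ) = S := by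
    rw [hSdef]; push_cast; rfl
  have hS_low : M ^ (m - 1) ≤ 2 * ‖S‖ := by
    rw [← hScast, Complex.norm_real, Real.norm_eq_abs]
    exact S_lower m hm hodd hlne hμne
  have hSa_low : M ^ (m - 1) / 4 ≤ ‖Sa‖ := by
    have h := norm_add_le Sa (S - Sa)
    rw [add_sub_cancel] at h
    have h2 : ‖S - Sa‖ = ‖Sa - S‖ := norm_sub_rev _ _
    linarith
  -- upper bound on |S|
  have hS_up : ‖S‖ ≤ (m:ℝ) * M ^ (m - 1) := by
    rw [hSdef]
    refine (norm_sum_le _ _).trans ?_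
    have hterm : ∀ i ∈ Finset.range m,
        ‖(l:ℂ) ^ i * (μ:ℂ) ^ (m - 1 - i)‖ ≤ M ^ (m - 1) := by
      intro i hi
      have hik : i + (m - 1 - i) = m - 1 := by have := Finset.mem_range.1 hi; omega
      rw [norm_mul, norm_pow, norm_pow, Complex.norm_real, Real.norm_eq_abs, Complex.norm_real, Real.norm_eq_abs]
      calc |l| ^ i * |μ| ^ (m - 1 - i) ≤ M ^ i * M ^ (m - 1 - i) := by
            gcongr <;> first | exact abs_nonneg l | exact abs_nonneg μ
        _ = M ^ (m - 1) := by rw [← pow_add, hik]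
    refine (Finset.sum_le_sum hterm).trans ?_
    rw [Finset.sum_const, Finset.card_range, nsmul_eq_mul]
  -- final assembly
  have hALpos : 0 < ‖(l:ℂ) ^ m - Complex.I‖ := norm_pos_iff.mpr hwl
  have hAMpos : 0 < ‖(μ:ℂ) ^ m - Complex.I‖ := norm_pos_iff.mpr hwμ
  have hBLpos : 0 < ‖zl‖ := norm_pos_iff.mpr hzl
  have hBMpos : 0 < ‖zμ‖ := norm_pos_iff.mpr hzμ
  have hdnn : 0 ≤ d := norm_nonneg _
  rw [zpow_neg, zpow_natCast, zpow_neg, zpow_natCast, hLHS, hRHS, ← mul_div_assoc,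
    div_le_div_iff₀ (mul_pos hALpos hAMpos) (mul_pos (pow_pos hBLpos m) (pow_pos hBMpos m))]
  push_cast
  have h4 : (2:ℝ) ^ m * 2 ^ m = 4 ^ m := by rw [← mul_pow]; norm_num
  have hSa4 : M ^ (m - 1) ≤ 4 * ‖Sa‖ := by linarith
  calc ‖S‖ * d * (‖zl‖ ^ m * ‖zμ‖ ^ m)
      ≤ ((m:ℝ) * M ^ (m - 1)) * d * ((2 * |l|) ^ m * (2 * |μ|) ^ m) := by
        gcongr <;> first
          | exact norm_nonneg _
          | positivity
    _ = ((m:ℝ) * M ^ (m - 1)) * d * ((4:ℝ) ^ m * (|l| ^ m * |μ| ^ m)) := by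
        rw [mul_pow, mul_pow, ← h4]; ring
    _ ≤ ((m:ℝ) * (4 * ‖Sa‖)) * d * ((4:ℝ) ^ m *
          (‖(l:ℂ) ^ m - Complex.I‖ * ‖(μ:ℂ) ^ m - Complex.I‖)) := by
        gcongr <;> first
          | exact norm_nonneg _
          | positivity
    _ = (4 * (m:ℝ) * 4 ^ m) * (‖Sa‖ * d) *
          (‖(l:ℂ) ^ m - Complex.I‖ * ‖(μ:ℂ) ^ m - Complex.I‖) := by
        ring
end

section
/- Let m be a positive integer, let a > 0 and r > 0. Define h(λ) = (λ - ia)^m / (λ^m - i) for real λ (well-defined since λ^m is real, so λ^m - i ≠ 0). Then there exists a constant C (depending on m, a, r) such that h is differentiable at every real λ with |λ| ≥ r and |h′(λ)| ≤ C·λ^{-2}. -/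
open Complex

/-- First estimate on page 6: the derivative of `h(λ) = (λ-ia)^m/(λ^m - i)` satisfies
`|h′(λ)| ≤ C λ^{-2}` for `|λ| ≥ r`. -/
theorem ratio_deriv_bound (m : ℕ) (hm : 0 < m) (a : ℝ) (ha : 0 < a) (r : ℝ) (hr : 0 < r) :
    ∃ C : ℝ, ∀ l : ℝ, r ≤ |l| →
      DifferentiableAt ℝ
        (fun t : ℝ => ((t : ℂ) - (a : ℂ) * Complex.I) ^ m / ((t : ℂ) ^ m - Complex.I)) l ∧
      ‖(deriv
        (fun t : ℝ => ((t : ℂ) - (a : ℂ) * Complex.I) ^ m / ((t : ℂ) ^ m - Complex.I)) l)‖ ≤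
        C / l ^ 2 := by
  obtain ⟨k, rfl⟩ : ∃ k, m = k + 1 := ⟨m - 1, (Nat.succ_pred_eq_of_pos hm).symm⟩
  refine ⟨(k+1) * (1 + a/r)^k * (a + 1/r^k), fun l hl => ?_⟩
  have hl0 : (0:ℝ) < |l| := lt_of_lt_of_le hr hl
  have hne : ((l:ℂ)^(k+1) - Complex.I) ≠ 0 := by
    intro h
    have him : ((l:ℂ)^(k+1)).im = 0 := by
      rw [← Complex.ofReal_pow, Complex.ofReal_im]
    rw [sub_eq_zero.mp h] at him
    simp at him
  have hg : HasDerivAt (fun t : ℝ => ((t:ℂ) - (a:ℂ)*Complex.I)^(k+1))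
      (((k:ℂ)+1) * ((l:ℂ) - (a:ℂ)*Complex.I)^k) l := by
    have h := (((hasDerivAt_id ((l:ℂ))).sub_const ((a:ℂ)*Complex.I)).pow (k+1)).comp_ofReal
    simpa using h
  have hd : HasDerivAt (fun t : ℝ => (t:ℂ)^(k+1) - Complex.I)
      (((k:ℂ)+1) * (l:ℂ)^k) l := by
    have h := ((hasDerivAt_pow (k+1) ((l:ℂ))).sub_const Complex.I).comp_ofReal
    simpa using h
  have hD : HasDerivAt (fun t : ℝ => ((t:ℂ) - (a:ℂ)*Complex.I)^(k+1) / ((t:ℂ)^(k+1) - Complex.I)) _ l :=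
    hg.div hd hne
  refine ⟨hD.differentiableAt, ?_⟩
  rw [hD.deriv]
  have num_eq : (((k:ℂ)+1) * ((l:ℂ) - (a:ℂ)*Complex.I)^k * ((l:ℂ)^(k+1) - Complex.I)
      - ((l:ℂ) - (a:ℂ)*Complex.I)^(k+1) * (((k:ℂ)+1) * (l:ℂ)^k))
      = ((k:ℂ)+1) * Complex.I * ((l:ℂ) - (a:ℂ)*Complex.I)^k * ((a:ℂ) * (l:ℂ)^k - 1) := by
    ring
  rw [num_eq, norm_div]
  have h1 : ‖(l:ℂ) - (a:ℂ)*Complex.I‖ ≤ |l| + a := by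
    calc ‖(l:ℂ) - (a:ℂ)*Complex.I‖
        ≤ ‖(l:ℂ)‖ + ‖(a:ℂ)*Complex.I‖ := by
          simpa [sub_eq_add_neg] using norm_add_le (l:ℂ) (-((a:ℂ)*Complex.I))
      _ = |l| + a := by simp [Complex.norm_real, abs_of_pos ha]
  have h2 : ‖(a:ℂ) * (l:ℂ)^k - 1‖ ≤ a * |l|^k + 1 := by
    calc ‖(a:ℂ) * (l:ℂ)^k - 1‖
        ≤ ‖(a:ℂ) * (l:ℂ)^k‖ + ‖(1:ℂ)‖ := by
          simpa [sub_eq_add_neg] using norm_add_le ((a:ℂ)*(l:ℂ)^k) (-1)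
      _ = a * |l|^k + 1 := by
          simp [norm_mul, Complex.norm_real, ← Complex.ofReal_pow, abs_of_pos ha, _root_.abs_pow]
  have hden : |l|^(k+1) ≤ ‖(l:ℂ)^(k+1) - Complex.I‖ := by
    have : |l|^(k+1) = |((l:ℂ)^(k+1) - Complex.I).re| := by
      rw [← Complex.ofReal_pow, Complex.sub_re, Complex.ofReal_re, Complex.I_re, sub_zero,
        _root_.abs_pow]
    rw [this]
    exact Complex.abs_re_le_norm _
  have habspos : (0:ℝ) < ‖(l:ℂ)^(k+1) - Complex.I‖ := norm_pos_iff.mpr hne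
  have hdenpos : (0:ℝ) < ‖((l:ℂ)^(k+1) - Complex.I)^2‖ := by
    rw [norm_pow]; exact pow_pos habspos 2
  have hl2 : (0:ℝ) < l^2 := by have hlne : l ≠ 0 := abs_pos.mp hl0; positivity
  rw [div_le_div_iff₀ hdenpos hl2]
  have hknat : ‖(k:ℂ)+1‖ = (k:ℝ)+1 := by
    rw [show ((k:ℂ)+1) = ((k+1:ℕ):ℂ) by push_cast; ring, Complex.norm_natCast]
    push_cast; ring
  have habs_num : ‖((k:ℂ)+1) * Complex.I * ((l:ℂ) - (a:ℂ)*Complex.I)^k * ((a:ℂ) * (l:ℂ)^k - 1)‖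
      = ((k:ℝ)+1) * ‖(l:ℂ) - (a:ℂ)*Complex.I‖^k * ‖(a:ℂ) * (l:ℂ)^k - 1‖ := by
    rw [norm_mul, norm_mul, norm_mul, Complex.norm_I, norm_pow, hknat]
    ring
  rw [habs_num, norm_pow]
  have e1 : |l| + a ≤ (1 + a/r) * |l| := by
    have h : a ≤ a / r * |l| := by
      rw [div_mul_eq_mul_div, le_div_iff₀ hr]
      exact mul_le_mul_of_nonneg_left hl ha.le
    nlinarith
  have e2 : a * |l|^k + 1 ≤ (a + 1/r^k) * |l|^k := by
    have hrk : r^k ≤ |l|^k := pow_le_pow_left₀ hr.le hl k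
    have hrkpos : (0:ℝ) < r^k := pow_pos hr k
    have h : (1:ℝ) ≤ (1/r^k) * |l|^k := by
      rw [one_div, inv_mul_eq_div, le_div_iff₀ hrkpos]
      linarith
    nlinarith
  have e1' : ‖(l:ℂ) - (a:ℂ)*Complex.I‖^k ≤ ((1 + a/r))^k * |l|^k := by
    calc ‖(l:ℂ) - (a:ℂ)*Complex.I‖^k ≤ (|l| + a)^k :=
          pow_le_pow_left₀ (norm_nonneg _) h1 k
      _ ≤ ((1 + a/r) * |l|)^k := pow_le_pow_left₀ (by positivity) e1 k
      _ = ((1 + a/r))^k * |l|^k := mul_pow _ _ _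
  have e2' : ‖(a:ℂ) * (l:ℂ)^k - 1‖ ≤ (a + 1/r^k) * |l|^k :=
    le_trans h2 e2
  have hC0 : (0:ℝ) ≤ ((k:ℝ)+1) * (1 + a/r)^k * (a + 1/r^k) := by positivity
  calc ((k:ℝ)+1) * ‖(l:ℂ) - (a:ℂ)*Complex.I‖^k * ‖(a:ℂ) * (l:ℂ)^k - 1‖ * l^2
      ≤ ((k:ℝ)+1) * ((1 + a/r)^k * |l|^k) * ((a + 1/r^k) * |l|^k) * l^2 := by
        apply mul_le_mul_of_nonneg_right _ hl2.le
        apply mul_le_mul _ e2' (norm_nonneg _) (by positivity)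
        exact mul_le_mul_of_nonneg_left e1' (by positivity)
      _ = ((k:ℝ)+1) * (1 + a/r)^k * (a + 1/r^k) * (|l|^(k+1))^2 := by
        rw [← _root_.sq_abs l]
        ring
      _ ≤ ((k:ℝ)+1) * (1 + a/r)^k * (a + 1/r^k) * ‖(l:ℂ)^(k+1) - Complex.I‖^2 := by
        apply mul_le_mul_of_nonneg_left _ hC0
        exact pow_le_pow_left₀ (by positivity) hden 2
end

section
/- Let m be an odd positive integer and let 0 < r ≤ R. Then there exists a₀ > 0 such that for every real a ≥ a₀ there exists a constant C with the following properties, where G(λ,μ) = (λ - ia)^m (μ - ia)^m / p(λ,μ;ia): for all real λ, μ ∈ [-R, R], G(λ,μ) is well-defined with |G(λ,μ)| ≤ C, the function λ ↦ G(λ,μ) is differentiable at every λ ∈ (-R, R), and |∂G/∂λ (λ,μ)| ≤ C. -/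
open Finset

lemma aux_one_add_pow_le (n : ℕ) (δ : ℝ) (hδ : 0 ≤ δ) (h : 2 * n * δ ≤ 1) :
    (1 + δ) ^ n ≤ 1 + 2 * n * δ := by
  induction n with
  | zero => simp
  | succ k ih =>
    have hk : 2 * (k : ℝ) * δ ≤ 1 := by
      have : (k : ℝ) ≤ (k + 1 : ℕ) := by exact_mod_cast Nat.le_succ k
      nlinarith [Nat.cast_nonneg (α := ℝ) k]
    have ihk := ih hk
    have h1 : (1 + δ) ^ (k + 1) = (1 + δ) ^ k * (1 + δ) := pow_succ _ _
    have hkd : 2 * (k : ℝ) * δ * δ ≤ δ := by nlinarith [Nat.cast_nonneg (α := ℝ) k]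
    have : (1 + δ) ^ k * (1 + δ) ≤ (1 + 2 * k * δ) * (1 + δ) := by
      apply mul_le_mul_of_nonneg_right ihk; linarith
    rw [h1]
    refine this.trans ?_
    push_cast
    nlinarith [Nat.cast_nonneg (α := ℝ) k]

lemma aux_abs_pow_sub_one (n : ℕ) (z : ℂ) (δ : ℝ) (hδ : 0 ≤ δ)
    (h : ‖z - 1‖ ≤ δ) : ‖z ^ n - 1‖ ≤ (1 + δ) ^ n - 1 := by
  have hz : ‖z‖ ≤ 1 + δ := by
    calc ‖z‖ = ‖z - 1 + 1‖ := by ring_nf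
    _ ≤ ‖z - 1‖ + ‖1‖ := norm_add_le _ _
    _ ≤ δ + 1 := by simpa using h
    _ = 1 + δ := by ring
  induction n with
  | zero => simp
  | succ k ih =>
    have key : z ^ (k + 1) - 1 = z * (z ^ k - 1) + (z - 1) := by ring
    calc ‖z ^ (k + 1) - 1‖
        ≤ ‖z * (z ^ k - 1)‖ + ‖z - 1‖ := by
          rw [key]; exact norm_add_le _ _
      _ = ‖z‖ * ‖z ^ k - 1‖ + ‖z - 1‖ := by
          rw [norm_mul]
      _ ≤ (1 + δ) * ((1 + δ) ^ k - 1) + δ := by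
          refine add_le_add (mul_le_mul hz ih (norm_nonneg _) (by linarith)) h
      _ = (1 + δ) ^ (k + 1) - 1 := by rw [pow_succ]; ring

lemma aux_abs_pow_mul_pow_sub_one (i j : ℕ) (z w : ℂ) (δ : ℝ) (hδ : 0 ≤ δ)
    (hz : ‖z - 1‖ ≤ δ) (hw : ‖w - 1‖ ≤ δ) :
    ‖z ^ i * w ^ j - 1‖ ≤ (1 + δ) ^ (i + j) - 1 := by
  have hzabs : ‖z‖ ≤ 1 + δ := by
    calc ‖z‖ = ‖z - 1 + 1‖ := by ring_nf
    _ ≤ ‖z - 1‖ + ‖1‖ := norm_add_le _ _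
    _ ≤ δ + 1 := by simpa using hz
    _ = 1 + δ := by ring
  have hzpow : ‖z ^ i‖ ≤ (1 + δ) ^ i := by
    rw [norm_pow]; exact pow_le_pow_left₀ (norm_nonneg _) hzabs i
  have key : z ^ i * w ^ j - 1 = z ^ i * (w ^ j - 1) + (z ^ i - 1) := by ring
  have h1 := aux_abs_pow_sub_one i z δ hδ hz
  have h2 := aux_abs_pow_sub_one j w δ hδ hw
  have hpos : (0:ℝ) ≤ (1 + δ) ^ j - 1 := by
    have : (1:ℝ) ≤ (1 + δ) ^ j := one_le_pow₀ (by linarith)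
    linarith
  calc ‖z ^ i * w ^ j - 1‖
      ≤ ‖z ^ i * (w ^ j - 1)‖ + ‖z ^ i - 1‖ := by
        rw [key]; exact norm_add_le _ _
    _ = ‖z ^ i‖ * ‖w ^ j - 1‖ + ‖z ^ i - 1‖ := by
        rw [norm_mul]
    _ ≤ (1 + δ) ^ i * ((1 + δ) ^ j - 1) + ((1 + δ) ^ i - 1) := by
        refine add_le_add (mul_le_mul hzpow h2 (norm_nonneg _) (by positivity)) h1
    _ = (1 + δ) ^ (i + j) - 1 := by rw [pow_add]; ring

lemma aux_pker_factor (m : ℕ) (a l μ : ℝ) (ha : a ≠ 0) :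
    pker m (l : ℂ) (μ : ℂ) ((a : ℂ) * Complex.I) =
      (-(a : ℂ) * Complex.I) ^ (m - 1) *
        ∑ j ∈ Finset.range m,
          (1 + Complex.I * l / a) ^ (m - 1 - j) * (1 + Complex.I * μ / a) ^ j := by
  have haC : (a : ℂ) ≠ 0 := by exact_mod_cast ha
  unfold pker
  rw [Finset.mul_sum]
  refine Finset.sum_congr rfl fun j hj => ?_
  have hjm : j ≤ m - 1 := Nat.le_sub_one_of_lt (Finset.mem_range.mp hj)
  have h1 : (l : ℂ) - (a : ℂ) * Complex.I =
      (-(a : ℂ) * Complex.I) * (1 + Complex.I * l / a) := by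
    field_simp
    ring_nf
    simp [Complex.I_sq]
  have h2 : (μ : ℂ) - (a : ℂ) * Complex.I =
      (-(a : ℂ) * Complex.I) * (1 + Complex.I * μ / a) := by
    field_simp
    ring_nf
    simp [Complex.I_sq]
  have hsum : (m - 1 - j) + j = m - 1 := Nat.sub_add_cancel hjm
  have key : ∀ (c x y : ℂ) (i j : ℕ), (c*x)^i * (c*y)^j = c^(i+j) * (x^i*y^j) := by
    intro c x y i j; rw [mul_pow, mul_pow, pow_add]; ring
  rw [h1, h2, key, hsum]

lemma aux_pker_ne_zero (m : ℕ) (hm : 0 < m) (R : ℝ) (hR : 0 < R) (a : ℝ)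
    (ha : 4 * m * R ≤ a) (l μ : ℝ) (hl : |l| ≤ R) (hμ : |μ| ≤ R) :
    pker m (l : ℂ) (μ : ℂ) ((a : ℂ) * Complex.I) ≠ 0 := by
  have hm1 : (1:ℝ) ≤ m := by exact_mod_cast hm
  have ha0 : 0 < a := lt_of_lt_of_le (by positivity) ha
  set δ : ℝ := R / a with hδdef
  have hδ0 : 0 ≤ δ := by positivity
  have hδsmall : 2 * (m - 1 : ℕ) * δ ≤ 1 / 2 := by
    have hcast : ((m - 1 : ℕ) : ℝ) ≤ (m : ℝ) := by
      exact_mod_cast Nat.sub_le m 1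
    have h4 : 4 * (m:ℝ) * R ≤ a := ha
    have hδle : δ ≤ 1 / (4 * m) := by
      rw [hδdef, div_le_div_iff₀ ha0 (by linarith)]
      nlinarith
    calc 2 * ((m - 1 : ℕ):ℝ) * δ ≤ 2 * (m:ℝ) * δ := by
          apply mul_le_mul_of_nonneg_right (by linarith) hδ0
      _ ≤ 1/2 := by
          have h2 : 2*(m:ℝ)*δ ≤ 2*(m:ℝ)*(1/(4*m)) :=
            mul_le_mul_of_nonneg_left hδle (by linarith)
          have h3 : 2*(m:ℝ)*(1/(4*(m:ℝ))) = 1/2 := by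
            field_simp
            ring
          linarith
  have hz : ‖(1 + Complex.I * l / a) - 1‖ ≤ δ := by
    have : (1 + Complex.I * (l:ℂ) / a) - 1 = Complex.I * l / a := by ring
    rw [this]
    rw [norm_div, norm_mul]
    simp only [Complex.norm_I, Complex.norm_real, Real.norm_eq_abs, one_mul]
    rw [hδdef, abs_of_pos ha0]
    gcongr
  have hw : ‖(1 + Complex.I * μ / a) - 1‖ ≤ δ := by
    have : (1 + Complex.I * (μ:ℂ) / a) - 1 = Complex.I * μ / a := by ring
    rw [this]
    rw [norm_div, norm_mul]
    simp only [Complex.norm_I, Complex.norm_real, Real.norm_eq_abs, one_mul]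
    rw [hδdef, abs_of_pos ha0]
    gcongr
  -- each term of the sum is within 1/2 of 1
  have hterm : ∀ j ∈ Finset.range m,
      ‖(1 + Complex.I * l / a) ^ (m - 1 - j) * (1 + Complex.I * μ / a) ^ j - 1‖
        ≤ 1/2 := by
    intro j hj
    have hjm : j ≤ m - 1 := Nat.le_sub_one_of_lt (Finset.mem_range.mp hj)
    have hsum : (m - 1 - j) + j = m - 1 := Nat.sub_add_cancel hjm
    have := aux_abs_pow_mul_pow_sub_one (m - 1 - j) j
      (1 + Complex.I * l / a) (1 + Complex.I * μ / a) δ hδ0 hz hw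
    rw [hsum] at this
    refine this.trans ?_
    have h1 := aux_one_add_pow_le (m - 1) δ hδ0 (by linarith)
    linarith
  -- hence the sum is nonzero
  have hSne : (∑ j ∈ Finset.range m,
      (1 + Complex.I * l / a) ^ (m - 1 - j) * (1 + Complex.I * μ / a) ^ j) ≠ 0 := by
    intro hS
    have hdiff : ‖(∑ j ∈ Finset.range m,
        (1 + Complex.I * (l:ℂ) / a) ^ (m - 1 - j) * (1 + Complex.I * (μ:ℂ) / a) ^ j) - m‖
        ≤ m * (1/2) := by
      have : (∑ j ∈ Finset.range m,
          (1 + Complex.I * (l:ℂ) / a) ^ (m - 1 - j) * (1 + Complex.I * (μ:ℂ) / a) ^ j) - m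
          = ∑ j ∈ Finset.range m,
            ((1 + Complex.I * (l:ℂ) / a) ^ (m - 1 - j) * (1 + Complex.I * (μ:ℂ) / a) ^ j - 1) := by
        rw [Finset.sum_sub_distrib]
        simp
      rw [this]
      calc ‖∑ j ∈ Finset.range m,
            ((1 + Complex.I * (l:ℂ) / a) ^ (m - 1 - j) * (1 + Complex.I * (μ:ℂ) / a) ^ j - 1)‖
          ≤ ∑ j ∈ Finset.range m, ‖(1 + Complex.I * (l:ℂ) / a) ^ (m - 1 - j) * (1 + Complex.I * (μ:ℂ) / a) ^ j - 1‖ := by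
            exact norm_sum_le _ _
        _ ≤ ∑ _j ∈ Finset.range m, (1/2 : ℝ) := Finset.sum_le_sum hterm
        _ = m * (1/2) := by simp [mul_comm]
    rw [hS] at hdiff
    simp only [zero_sub, norm_neg] at hdiff
    rw [Complex.norm_natCast] at hdiff
    have : (0:ℝ) < m := by linarith
    linarith
  rw [aux_pker_factor m a l μ (ne_of_gt ha0)]
  apply mul_ne_zero _ hSne
  apply pow_ne_zero
  simp only [neg_mul, ne_eq, neg_eq_zero, mul_eq_zero, Complex.I_ne_zero, or_false]
  exact_mod_cast ne_of_gt ha0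

/-- Boundedness of `G(λ,μ) = (λ-ia)^m (μ-ia)^m / p(λ,μ;ia)` and of its λ-derivative on
the square `|λ| ≤ R`, `|μ| ≤ R`, for `m` odd and `a` sufficiently large. -/
theorem G_bounded_on_square (m : ℕ) (hm : 0 < m) (hodd : Odd m)
    (r R : ℝ) (hr : 0 < r) (hrR : r ≤ R) :
    ∃ a₀ > 0, ∀ a : ℝ, a₀ ≤ a → ∃ C : ℝ,
      (∀ l μ : ℝ, |l| ≤ R → |μ| ≤ R →
        pker m (l : ℂ) (μ : ℂ) ((a : ℂ) * Complex.I) ≠ 0 ∧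
        ‖((l : ℂ) - (a : ℂ) * Complex.I) ^ m *
            ((μ : ℂ) - (a : ℂ) * Complex.I) ^ m /
            pker m (l : ℂ) (μ : ℂ) ((a : ℂ) * Complex.I)‖ ≤ C) ∧
      (∀ l μ : ℝ, -R < l → l < R → |μ| ≤ R →
        DifferentiableAt ℝ
          (fun t : ℝ => ((t : ℂ) - (a : ℂ) * Complex.I) ^ m *
            ((μ : ℂ) - (a : ℂ) * Complex.I) ^ m /
            pker m (t : ℂ) (μ : ℂ) ((a : ℂ) * Complex.I)) l ∧
        ‖deriv
          (fun t : ℝ => ((t : ℂ) - (a : ℂ) * Complex.I) ^ m *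
            ((μ : ℂ) - (a : ℂ) * Complex.I) ^ m /
            pker m (t : ℂ) (μ : ℂ) ((a : ℂ) * Complex.I)) l‖ ≤ C) := by
  have hR : 0 < R := lt_of_lt_of_le hr hrR
  refine ⟨4 * m * R, by positivity, fun a ha => ?_⟩
  set z : ℂ := (a : ℂ) * Complex.I with hzdef
  have hne : ∀ l μ : ℝ, |l| ≤ R → |μ| ≤ R → pker m (l : ℂ) (μ : ℂ) z ≠ 0 :=
    fun l μ hl hμ => aux_pker_ne_zero m hm R hR a ha l μ hl hμ
  -- continuous functions on the square
  set K : Set (ℝ × ℝ) := Set.Icc (-R) R ×ˢ Set.Icc (-R) R with hKdef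
  have hKcomp : IsCompact K := (isCompact_Icc).prod isCompact_Icc
  have hc1 : Continuous fun q : ℝ × ℝ => ((q.1 : ℂ) - z) :=
    (Complex.continuous_ofReal.comp continuous_fst).sub continuous_const
  have hc2 : Continuous fun q : ℝ × ℝ => ((q.2 : ℂ) - z) :=
    (Complex.continuous_ofReal.comp continuous_snd).sub continuous_const
  have hcp : Continuous fun q : ℝ × ℝ => pker m (q.1 : ℂ) (q.2 : ℂ) z := by
    unfold pker
    exact continuous_finset_sum _ fun j _ => (hc1.pow _).mul (hc2.pow _)
  have hmemK : ∀ l μ : ℝ, |l| ≤ R → |μ| ≤ R → ((l, μ) : ℝ × ℝ) ∈ K := by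
    intro l μ hl hμ
    exact ⟨abs_le.mp hl |>.imp (fun h => h) (fun h => h) |> fun h => ⟨h.1, h.2⟩,
      abs_le.mp hμ |>.imp (fun h => h) (fun h => h) |> fun h => ⟨h.1, h.2⟩⟩
  have hpneK : ∀ q ∈ K, pker m (q.1 : ℂ) (q.2 : ℂ) z ≠ 0 := by
    rintro ⟨l, μ⟩ ⟨hl, hμ⟩
    exact hne l μ (abs_le.mpr ⟨hl.1, hl.2⟩) (abs_le.mpr ⟨hμ.1, hμ.2⟩)
  -- the function G and its derivative-formula D
  set Q2 : ℝ × ℝ → ℂ := fun q => ∑ j ∈ Finset.range m,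
    ((m - 1 - j : ℕ) : ℂ) * ((q.1 : ℂ) - z) ^ (m - 1 - j - 1) * 1 * ((q.2 : ℂ) - z) ^ j
    with hQ2def
  set G2 : ℝ × ℝ → ℂ := fun q =>
    ((q.1 : ℂ) - z) ^ m * ((q.2 : ℂ) - z) ^ m / pker m (q.1 : ℂ) (q.2 : ℂ) z with hG2def
  set D2 : ℝ × ℝ → ℂ := fun q =>
    (((m : ℂ) * ((q.1 : ℂ) - z) ^ (m - 1) * 1 * ((q.2 : ℂ) - z) ^ m) *
        pker m (q.1 : ℂ) (q.2 : ℂ) z -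
      ((q.1 : ℂ) - z) ^ m * ((q.2 : ℂ) - z) ^ m * Q2 q) /
      (pker m (q.1 : ℂ) (q.2 : ℂ) z) ^ 2 with hD2def
  have hG2cont : ContinuousOn G2 K :=
    (((hc1.pow m).mul (hc2.pow m)).continuousOn).div hcp.continuousOn hpneK
  have hQ2cont : Continuous Q2 := by
    rw [hQ2def]
    exact continuous_finset_sum _ fun j _ =>
      (((continuous_const.mul (hc1.pow _)).mul continuous_const).mul (hc2.pow _))
  have hD2cont : ContinuousOn D2 K := by
    apply ContinuousOn.div
    · exact ((((continuous_const.mul (hc1.pow _)).mul continuous_const).mul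
        (hc2.pow _)).mul hcp).continuousOn.sub
        (((hc1.pow m).mul (hc2.pow m)).mul hQ2cont).continuousOn
    · exact (hcp.pow 2).continuousOn
    · intro q hq
      exact pow_ne_zero 2 (hpneK q hq)
  obtain ⟨C₁, hC₁⟩ := hKcomp.exists_bound_of_continuousOn hG2cont
  obtain ⟨C₂, hC₂⟩ := hKcomp.exists_bound_of_continuousOn hD2cont
  refine ⟨max C₁ C₂, ?_, ?_⟩
  · intro l μ hl hμ
    refine ⟨hne l μ hl hμ, ?_⟩
    have h := hC₁ (l, μ) (hmemK l μ hl hμ)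
    exact le_trans h (le_max_left _ _)
  · intro l μ hl1 hl2 hμ
    have hl : |l| ≤ R := abs_le.mpr ⟨hl1.le, hl2.le⟩
    have hpne : pker m (l : ℂ) (μ : ℂ) z ≠ 0 := hne l μ hl hμ
    -- derivative of the numerator (as a complex function)
    have hN : HasDerivAt (fun t : ℂ => (t - z) ^ m * ((μ : ℂ) - z) ^ m)
        ((m : ℂ) * ((l : ℂ) - z) ^ (m - 1) * 1 * ((μ : ℂ) - z) ^ m) (l : ℂ) :=
      (((hasDerivAt_id ((l : ℂ))).sub_const z).pow m).mul_const _
    -- derivative of the denominator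
    have hP : HasDerivAt (fun t : ℂ => pker m t (μ : ℂ) z)
        (∑ j ∈ Finset.range m,
          ((m - 1 - j : ℕ) : ℂ) * ((l : ℂ) - z) ^ (m - 1 - j - 1) * 1 * ((μ : ℂ) - z) ^ j)
        (l : ℂ) := by
      apply HasDerivAt.fun_sum
      intro j _
      exact (((hasDerivAt_id ((l : ℂ))).sub_const z).pow (m - 1 - j)).mul_const _
    have hdiv := hN.div hP hpne
    have hreal := hdiv.comp_ofReal
    have hDval : DifferentiableAt ℝ
        (fun t : ℝ => ((t : ℂ) - z) ^ m * ((μ : ℂ) - z) ^ m /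
          pker m (t : ℂ) (μ : ℂ) z) l := hreal.differentiableAt
    refine ⟨hDval, ?_⟩
    have hderiv : deriv (fun t : ℝ => ((t : ℂ) - z) ^ m * ((μ : ℂ) - z) ^ m /
        pker m (t : ℂ) (μ : ℂ) z) l = D2 (l, μ) := by
      exact hreal.deriv
    rw [hderiv]
    have h := hC₂ (l, μ) (hmemK l μ hl hμ)
    exact le_trans h (le_max_right _ _)
end
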